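/- arXiv:0712.0489 — 6 statements merged into one kernel-verified Lean document; each statement's English description precedes it below -/
import Mathlib

section
/- For every integer g ≥ 1 there exist an infinite, connected graph G = (V,E) with finite maximal degree, a root o ∈ V such that G is (g,o)-growing, and constants β₀ > 0 and θ > 0 such that for every β ≥ β₀ and all sufficiently large r, the heat-bath Glauber dynamics at inverse temperature β and zero external field on the ball B_r with free boundary condition (i.e. with stationary Gibbs measure on {−1,+1}^{B_r} proportional to exp(β Σ_{(x,y)∈E(B_r)} σ_x σ_y), the sum over edges with both endpoints in B_r) has spectral gap at most e^{−θ n}, where n = |B_r|. -/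
/- Common framework: Ising model with boundary conditions on (finite pieces of)
   locally finite graphs, heat-bath Glauber dynamics quantities. -/

open Finset
open scoped Classical

noncomputable section

namespace IsingGlauber

/-- The real spin value of a Boolean spin: `true ↦ +1`, `false ↦ -1`. -/
def spin (b : Bool) : ℝ := if b then 1 else -1

variable {V : Type*}

/-- Neighbourhood finset of a vertex, from an explicit local finiteness witness. -/
def nbr (G : SimpleGraph V) (hlf : G.LocallyFinite) (x : V) : Finset V :=
  @SimpleGraph.neighborFinset V G x (hlf x)

/-- `G` is `(g,o)`-growing: every vertex `x` (say at distance `r` from `o`) has at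
    least `g` more neighbours in level `r+1` than in the ball of radius `r`. -/
def IsGrowing (G : SimpleGraph V) (hlf : G.LocallyFinite) (g : ℕ) (o : V) : Prop :=
  ∀ x : V,
    ((nbr G hlf x).filter fun z => G.dist o z ≤ G.dist o x).card + g ≤
      ((nbr G hlf x).filter fun z => G.dist o z = G.dist o x + 1).card

variable [DecidableEq V]

/-- External vertex boundary of a finite vertex set. -/
def vbd (G : SimpleGraph V) (hlf : G.LocallyFinite) (A : Finset V) : Finset V :=
  A.biUnion (fun a => nbr G hlf a) \ A

/-- Closure `A ∪ ∂_V A` of a finite vertex set. -/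
def cl (G : SimpleGraph V) (hlf : G.LocallyFinite) (A : Finset V) : Finset V :=
  A ∪ vbd G hlf A

/-- Ising Hamiltonian (zero field) with boundary: `Σ_{(x,y) ∈ E(A ∪ ∂_V A)} σ_x σ_y`,
    the sum over edges with both endpoints in `A ∪ ∂_V A` (each edge counted once). -/
def energyB (G : SimpleGraph V) (hlf : G.LocallyFinite) (A : Finset V) (σ : V → Bool) : ℝ :=
  (1 / 2) * ∑ x ∈ cl G hlf A, ∑ y ∈ (cl G hlf A).filter (fun y => G.Adj x y),
    spin (σ x) * spin (σ y)

/-- Free-boundary Ising Hamiltonian: `Σ_{(x,y) ∈ E(A)} σ_x σ_y`,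
    the sum over edges with both endpoints in `A` (each edge counted once). -/
def energyF (G : SimpleGraph V) (A : Finset V) (σ : V → Bool) : ℝ :=
  (1 / 2) * ∑ x ∈ A, ∑ y ∈ A.filter (fun y => G.Adj x y), spin (σ x) * spin (σ y)

/-- The configuration equal to `p` on `A` and to `η` off `A`. -/
def patch (A : Finset V) (η : V → Bool) (p : ∀ a ∈ A, Bool) : V → Bool :=
  fun v => if h : v ∈ A then p v h else η v

/-- Unnormalised Gibbs sum over configurations agreeing with `η` off `A`,
    with energy functional `E` (which should already include the factor `β`). -/
def wsum (E : (V → Bool) → ℝ) (A : Finset V) (η : V → Bool) (f : (V → Bool) → ℝ) : ℝ :=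
  ∑ p ∈ A.pi (fun _ => (Finset.univ : Finset Bool)),
    Real.exp (E (patch A η p)) * f (patch A η p)

/-- Gibbs expectation of `f` for the measure on region `A` with boundary condition `η`. -/
def gExp (E : (V → Bool) → ℝ) (A : Finset V) (η : V → Bool) (f : (V → Bool) → ℝ) : ℝ :=
  wsum E A η f / wsum E A η (fun _ => 1)

/-- Gibbs probability of an event. -/
def gProb (E : (V → Bool) → ℝ) (A : Finset V) (η : V → Bool) (P : (V → Bool) → Prop) : ℝ :=
  gExp E A η (fun σ => if P σ then 1 else 0)

/-- Gibbs variance of `f`. -/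
def gVar (E : (V → Bool) → ℝ) (A : Finset V) (η : V → Bool) (f : (V → Bool) → ℝ) : ℝ :=
  gExp E A η (fun σ => f σ ^ 2) - gExp E A η f ^ 2

/-- Dirichlet form of the heat-bath Glauber dynamics:
    `D(f) = Σ_{x ∈ A} μ(Var_x(f))`, where `Var_x(f)(σ)` is the variance of `f`
    under the one-site conditional Gibbs measure at `x` given `σ` elsewhere. -/
def dirich (E : (V → Bool) → ℝ) (A : Finset V) (η : V → Bool) (f : (V → Bool) → ℝ) : ℝ :=
  ∑ x ∈ A, gExp E A η (fun σ => gVar E {x} σ f)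

/-- Spectral gap `c_gap(μ) = inf { D(f)/Var(f) : Var(f) ≠ 0 }`. -/
def cgap (E : (V → Bool) → ℝ) (A : Finset V) (η : V → Bool) : ℝ :=
  sInf {r : ℝ | ∃ f : (V → Bool) → ℝ, gVar E A η f ≠ 0 ∧ r = dirich E A η f / gVar E A η f}

/-- The edge boundary of `C`, encoded as ordered pairs `(u,v)` with `u ∈ C`,
    `v ∉ C` and `u ~ v`; these pairs are in bijection with the boundary edges. -/
def obd (G : SimpleGraph V) (hlf : G.LocallyFinite) (C : Finset V) : Finset (V × V) :=
  (C ×ˢ C.biUnion (fun c => nbr G hlf c)).filter (fun p => G.Adj p.1 p.2 ∧ p.2 ∉ C)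

end IsingGlauber

open IsingGlauber


namespace StatementOneAux

lemma pow_le_three_pow_mul_factorial (m : ℕ) : (m:ℝ)^m ≤ 3^m * (Nat.factorial m) := by
  induction m with
  | zero => simp
  | succ m ih =>
    have key : ((m:ℝ)+1)^m ≤ 3 * (m:ℝ)^m := by
      rcases Nat.eq_zero_or_pos m with hm | hm
      · subst hm; norm_num
      · have hmR : (1:ℝ) ≤ (m:ℝ) := by exact_mod_cast hm
        have h1 : (1 + 1/(m:ℝ)) ≤ Real.exp (1/(m:ℝ)) := by
          have := Real.add_one_le_exp (1/(m:ℝ)); linarith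
        have h2 : (1 + 1/(m:ℝ))^m ≤ Real.exp (1/(m:ℝ)) ^ m :=
          pow_le_pow_left₀ (by positivity) h1 m
        have h3 : Real.exp (1/(m:ℝ)) ^ m = Real.exp 1 := by
          rw [← Real.exp_nat_mul]
          congr 1
          field_simp
        have h4 : ((m:ℝ)+1)^m = (m:ℝ)^m * (1 + 1/(m:ℝ))^m := by
          rw [← mul_pow]
          congr 1
          field_simp
        have h5 : Real.exp 1 ≤ 3 := le_of_lt (lt_trans Real.exp_one_lt_d9 (by norm_num))
        have h6 : (0:ℝ) ≤ (m:ℝ)^m := by positivity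
        calc ((m:ℝ)+1)^m = (m:ℝ)^m * (1 + 1/(m:ℝ))^m := h4
          _ ≤ (m:ℝ)^m * Real.exp 1 := by
              apply mul_le_mul_of_nonneg_left _ h6
              rw [← h3]; exact h2
          _ ≤ 3 * (m:ℝ)^m := by nlinarith
    have hf : (0:ℝ) < (Nat.factorial m) := by exact_mod_cast Nat.factorial_pos m
    have h3m : (0:ℝ) ≤ (3:ℝ)^m := by positivity
    calc ((m+1:ℕ):ℝ)^(m+1) = ((m:ℝ)+1)^m * ((m:ℝ)+1) := by push_cast; ring
      _ ≤ (3 * (m:ℝ)^m) * ((m:ℝ)+1) := by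
          apply mul_le_mul_of_nonneg_right key (by positivity)
      _ ≤ (3 * (3^m * (Nat.factorial m))) * ((m:ℝ)+1) := by
          have := ih
          have hm1 : (0:ℝ) ≤ (m:ℝ)+1 := by positivity
          nlinarith
      _ = 3^(m+1) * (((m:ℝ)+1) * (Nat.factorial m)) := by ring
      _ = 3^(m+1) * ((Nat.factorial (m+1) : ℝ)) := by
          rw [Nat.factorial_succ]; push_cast; ring

lemma choose_le_two_pow {s m : ℕ} (hm : 1 ≤ m) (h : 3*s ≤ 600*m) :
    s.choose m ≤ 2^(10*m) := by
  have hN : (Nat.factorial m) * s.choose m ≤ s^m := by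
    rw [← Nat.descFactorial_eq_factorial_mul_choose]; exact Nat.descFactorial_le_pow s m
  have hR : ((Nat.factorial m) : ℝ) * s.choose m ≤ (s:ℝ)^m := by exact_mod_cast hN
  have hs : (s:ℝ) ≤ 600 * ((m:ℝ)/3) := by
    have : (3*s : ℝ) ≤ 600*m := by exact_mod_cast h
    linarith
  have h600 : (s:ℝ)^m ≤ 600^m * ((m:ℝ)/3)^m := by
    rw [← mul_pow]; exact pow_le_pow_left₀ (by positivity) hs m
  have h2 : ((m:ℝ)/3)^m ≤ (Nat.factorial m) := by
    have := pow_le_three_pow_mul_factorial m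
    rw [div_pow]
    rw [div_le_iff₀ (by positivity)]
    calc (m:ℝ)^m ≤ 3^m * (Nat.factorial m) := this
      _ = ((Nat.factorial m) : ℝ) * 3^m := by ring
  have hfin : ((Nat.factorial m) : ℝ) * s.choose m ≤ ((Nat.factorial m) : ℝ) * 600^m := by
    calc ((Nat.factorial m) : ℝ) * s.choose m ≤ (s:ℝ)^m := hR
      _ ≤ 600^m * ((m:ℝ)/3)^m := h600
      _ ≤ 600^m * (Nat.factorial m) := by
          apply mul_le_mul_of_nonneg_left h2 (by positivity)
      _ = ((Nat.factorial m) : ℝ) * 600^m := by ring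
  have hfpos : (0:ℝ) < (Nat.factorial m) := by exact_mod_cast Nat.factorial_pos m
  have hRfin : (s.choose m : ℝ) ≤ 600^m := le_of_mul_le_mul_left hfin hfpos
  have hNfin : s.choose m ≤ 600^m := by exact_mod_cast hRfin
  calc s.choose m ≤ 600^m := hNfin
    _ ≤ (2^10)^m := Nat.pow_le_pow_left (by norm_num) m
    _ = 2^(10*m) := by rw [← pow_mul]

lemma two_pow_mul_descFactorial_le {s L : ℕ} (h2s : 2*s ≤ L) :
    ∀ k, k ≤ s → 2^k * s.descFactorial k ≤ L.descFactorial k := by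
  intro k
  induction k with
  | zero => intro _; simp
  | succ k ih =>
    intro hk
    have ih' := ih (by omega)
    rw [Nat.descFactorial_succ, Nat.descFactorial_succ]
    have h1 : 2 * (s - k) ≤ L - k := by omega
    calc 2^(k+1) * ((s-k) * s.descFactorial k)
        = (2*(s-k)) * (2^k * s.descFactorial k) := by ring
      _ ≤ (L-k) * L.descFactorial k := Nat.mul_le_mul h1 ih'


lemma card_perm_mapsTo {L : ℕ} (A T : Finset (Fin L)) :
    (univ.filter fun π : Equiv.Perm (Fin L) => ∀ a ∈ A, π a ∈ T).card
      ≤ T.card.descFactorial A.card * Nat.factorial (L - A.card) := by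
  classical
  set k := A.card with hkdef
  have hAc : (Aᶜ : Finset (Fin L)).card = L - k := by
    rw [card_compl]; simp [hkdef]
  -- helper: the complement of the image of an embedding f : A ↪ T
  let mkB : (↥A ↪ ↥T) → Finset (Fin L) := fun f =>
    ((univ : Finset ↥A).image (fun a => ((f a : ↥T) : Fin L)))ᶜ
  have hmkB : ∀ f : ↥A ↪ ↥T, (mkB f).card = L - k := by
    intro f
    have himg : ((univ : Finset ↥A).image (fun a => ((f a : ↥T) : Fin L))).card = k := by
      rw [Finset.card_image_of_injective _ (fun a b hab => f.injective (Subtype.ext hab))]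
      simp [hkdef]
    rw [card_compl, himg]; simp
  set eA := Aᶜ.orderIsoOfFin hAc with heA
  -- the subtype of good permutations
  have hcard : (univ.filter fun π : Equiv.Perm (Fin L) => ∀ a ∈ A, π a ∈ T).card
      = Fintype.card {π : Equiv.Perm (Fin L) // ∀ a ∈ A, π a ∈ T} := by
    rw [Fintype.card_subtype]
  rw [hcard]
  -- the embedding component of a good permutation
  let fF : {π : Equiv.Perm (Fin L) // ∀ a ∈ A, π a ∈ T} → (↥A ↪ ↥T) := fun π =>
    ⟨fun a => ⟨π.1 a.1, π.2 a.1 a.2⟩, by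
      intro a b hab
      have : π.1 a.1 = π.1 b.1 := congrArg Subtype.val hab
      exact Subtype.ext (π.1.injective this)⟩
  have hBim : ∀ π : {π : Equiv.Perm (Fin L) // ∀ a ∈ A, π a ∈ T},
      mkB (fF π) = (A.image π.1)ᶜ := by
    intro π
    have him : ((univ : Finset ↥A).image (fun a => ((fF π a : ↥T) : Fin L))) = A.image π.1 := by
      ext y
      constructor
      · intro hy
        obtain ⟨a, -, rfl⟩ := Finset.mem_image.1 hy
        exact Finset.mem_image.2 ⟨a.1, a.2, rfl⟩
      · intro hy
        obtain ⟨a, ha, rfl⟩ := Finset.mem_image.1 hy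
        exact Finset.mem_image.2 ⟨⟨a, ha⟩, Finset.mem_univ _, rfl⟩
    show ((univ : Finset ↥A).image (fun a => ((fF π a : ↥T) : Fin L)))ᶜ = (A.image π.1)ᶜ
    rw [him]
  have hmemB : ∀ (π : {π : Equiv.Perm (Fin L) // ∀ a ∈ A, π a ∈ T}) (j : Fin (L-k)),
      π.1 (eA j).1 ∈ mkB (fF π) := by
    intro π j
    rw [hBim π, Finset.mem_compl]
    intro hmem
    obtain ⟨a, ha, hae⟩ := Finset.mem_image.1 hmem
    have : a = (eA j).1 := π.1.injective hae
    have h2 : ((eA j).1 : Fin L) ∈ Aᶜ := (eA j).2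
    rw [Finset.mem_compl] at h2
    exact h2 (this ▸ ha)
  -- the full injection
  let Φ : {π : Equiv.Perm (Fin L) // ∀ a ∈ A, π a ∈ T} →
      (↥A ↪ ↥T) × (Fin (L-k) ↪ Fin (L-k)) := fun π =>
    ⟨fF π, ⟨fun j => ((mkB (fF π)).orderIsoOfFin (hmkB (fF π))).symm ⟨π.1 (eA j).1, hmemB π j⟩, by
      intro j j' hjj
      have h1 := congrArg (fun z => (((mkB (fF π)).orderIsoOfFin (hmkB (fF π))) z : Fin L)) hjj
      simp only [OrderIso.apply_symm_apply] at h1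
      have h2 : (eA j).1 = (eA j').1 := π.1.injective h1
      have h3 : eA j = eA j' := Subtype.ext h2
      exact eA.injective h3⟩⟩
  have hΦinj : Function.Injective Φ := by
    intro π₁ π₂ h
    have h1 : fF π₁ = fF π₂ := congrArg Prod.fst h
    have h2 : (Φ π₁).2 = (Φ π₂).2 := congrArg Prod.snd h
    have hA : ∀ a (ha : a ∈ A), π₁.1 a = π₂.1 a := by
      intro a ha
      have := congrArg (fun f : ↥A ↪ ↥T => ((f ⟨a, ha⟩ : ↥T) : Fin L)) h1
      exact this
    apply Subtype.ext
    apply Equiv.ext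
    intro x
    by_cases hx : x ∈ A
    · exact hA x hx
    · have hxc : x ∈ Aᶜ := Finset.mem_compl.2 hx
      set j := eA.symm ⟨x, hxc⟩ with hj
      have hxj : (eA j).1 = x := by rw [hj, OrderIso.apply_symm_apply]
      have hval : (Φ π₁).2 j = (Φ π₂).2 j := by rw [h2]
      -- apply the order iso of π₁'s complement to both sides
      have hv1 : (((mkB (fF π₁)).orderIsoOfFin (hmkB (fF π₁))) ((Φ π₁).2 j) : Fin L)
          = π₁.1 (eA j).1 := by
        exact congrArg Subtype.val (OrderIso.apply_symm_apply ((mkB (fF π₁)).orderIsoOfFin (hmkB (fF π₁))) ⟨_, hmemB π₁ j⟩)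
      have hv2 : (((mkB (fF π₂)).orderIsoOfFin (hmkB (fF π₂))) ((Φ π₂).2 j) : Fin L)
          = π₂.1 (eA j).1 := by
        exact congrArg Subtype.val (OrderIso.apply_symm_apply ((mkB (fF π₂)).orderIsoOfFin (hmkB (fF π₂))) ⟨_, hmemB π₂ j⟩)
      have hsame : (((mkB (fF π₁)).orderIsoOfFin (hmkB (fF π₁))) ((Φ π₂).2 j) : Fin L)
          = (((mkB (fF π₂)).orderIsoOfFin (hmkB (fF π₂))) ((Φ π₂).2 j) : Fin L) := by
        have := congrArg
          (fun (e : ↥A ↪ ↥T) => (((mkB e).orderIsoOfFin (hmkB e)) ((Φ π₂).2 j) : Fin L)) h1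
        simpa using this
      rw [← hxj]
      rw [← hv1, hval, hsame, hv2]
  have hle := Fintype.card_le_of_injective Φ hΦinj
  calc Fintype.card {π : Equiv.Perm (Fin L) // ∀ a ∈ A, π a ∈ T}
      ≤ Fintype.card ((↥A ↪ ↥T) × (Fin (L-k) ↪ Fin (L-k))) := hle
    _ = Fintype.card (↥A ↪ ↥T) * Fintype.card (Fin (L-k) ↪ Fin (L-k)) := Fintype.card_prod _ _
    _ = T.card.descFactorial k * Nat.factorial (L - k) := by
        rw [Fintype.card_embedding_eq, Fintype.card_embedding_eq]
        simp [Nat.descFactorial_self, hkdef]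

lemma card_perm_overlap {L : ℕ} (T : Finset (Fin L)) (k : ℕ) :
    (univ.filter fun π : Equiv.Perm (Fin L) => k ≤ ((T.filter fun a => π a ∈ T)).card).card
      ≤ T.card.choose k * (T.card.descFactorial k * Nat.factorial (L - k)) := by
  classical
  have hsub : (univ.filter fun π : Equiv.Perm (Fin L) => k ≤ ((T.filter fun a => π a ∈ T)).card)
      ⊆ (T.powersetCard k).biUnion
          (fun A => univ.filter fun π : Equiv.Perm (Fin L) => ∀ a ∈ A, π a ∈ T) := by
    intro π hπ
    simp only [mem_filter, mem_univ, true_and] at hπ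
    obtain ⟨A, hAsub, hAcard⟩ := Finset.exists_subset_card_eq hπ
    refine mem_biUnion.2 ⟨A, ?_, ?_⟩
    · exact Finset.mem_powersetCard.2 ⟨hAsub.trans (filter_subset _ _), hAcard⟩
    · simp only [mem_filter, mem_univ, true_and]
      intro a ha
      exact (mem_filter.1 (hAsub ha)).2
  calc (univ.filter fun π : Equiv.Perm (Fin L) => k ≤ ((T.filter fun a => π a ∈ T)).card).card
      ≤ ((T.powersetCard k).biUnion
          (fun A => univ.filter fun π : Equiv.Perm (Fin L) => ∀ a ∈ A, π a ∈ T)).card :=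
        card_le_card hsub
    _ ≤ ∑ A ∈ T.powersetCard k,
          (univ.filter fun π : Equiv.Perm (Fin L) => ∀ a ∈ A, π a ∈ T).card :=
        card_biUnion_le
    _ ≤ ∑ _A ∈ T.powersetCard k, T.card.descFactorial k * Nat.factorial (L - k) := by
        apply Finset.sum_le_sum
        intro A hA
        have hcA := (Finset.mem_powersetCard.1 hA).2
        have := card_perm_mapsTo A T
        rwa [hcA] at this
    _ = T.card.choose k * (T.card.descFactorial k * Nat.factorial (L - k)) := by
        rw [Finset.sum_const, Finset.card_powersetCard, smul_eq_mul]

lemma perT {L : ℕ} (hL : 1500 ≤ L) (T : Finset (Fin L)) (h1 : 2*L ≤ 5*T.card)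
    (h2 : 2*T.card ≤ L) :
    ((univ.filter fun π : Equiv.Perm (Fin L) =>
        (T.card - T.card/100) ≤ ((T.filter fun a => π a ∈ T)).card).card)^4 * 2^(L+1)
      ≤ (Nat.factorial L)^4 := by
  classical
  set s := T.card with hs
  have hsL : s ≤ L := by omega
  set m := s/100 with hm
  set k := s - m with hk
  have hm100 : 100 * m ≤ s := by omega
  have hsb : 600 ≤ s := by omega
  have hm1 : 1 ≤ m := by omega
  have hks : k ≤ s := by omega
  have h600 : 3*s ≤ 600*m := by omega
  have hb := card_perm_overlap T k
  have hsym : s.choose k = s.choose m := by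
    rw [hk]; exact Nat.choose_symm (by omega)
  have hch : s.choose m ≤ 2^(10*m) := choose_le_two_pow hm1 h600
  have hdf : 2^k * s.descFactorial k ≤ L.descFactorial k :=
    two_pow_mul_descFactorial_le (by omega) k hks
  have hLfact : L.descFactorial k * Nat.factorial (L - k) = Nat.factorial L := by
    rw [mul_comm]; exact Nat.factorial_mul_descFactorial (by omega)
  set b := (univ.filter fun π : Equiv.Perm (Fin L) =>
      k ≤ ((T.filter fun a => π a ∈ T)).card).card with hbdef
  have key : b * 2^k ≤ 2^(10*m) * Nat.factorial L := by
    calc b * 2^k ≤ (s.choose k * (s.descFactorial k * Nat.factorial (L-k))) * 2^k :=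
          Nat.mul_le_mul_right _ hb
      _ = s.choose k * ((2^k * s.descFactorial k) * Nat.factorial (L-k)) := by ring
      _ ≤ s.choose k * (L.descFactorial k * Nat.factorial (L-k)) := by
          apply Nat.mul_le_mul_left
          exact Nat.mul_le_mul_right _ hdf
      _ = s.choose m * Nat.factorial L := by rw [hsym, hLfact]
      _ ≤ 2^(10*m) * Nat.factorial L := Nat.mul_le_mul_right _ hch
  have key4 : (b * 2^k)^4 ≤ (2^(10*m) * Nat.factorial L)^4 := Nat.pow_le_pow_left key 4
  have hexp : 40*m + (L+1) ≤ 4*k := by omega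
  have main : (b^4 * 2^(L+1)) * 2^(4*k) ≤ (Nat.factorial L)^4 * 2^(4*k) := by
    calc (b^4 * 2^(L+1)) * 2^(4*k) = (b*2^k)^4 * 2^(L+1) := by
          rw [mul_pow, ← pow_mul]; ring
      _ ≤ (2^(10*m) * Nat.factorial L)^4 * 2^(L+1) :=
          Nat.mul_le_mul_right _ key4
      _ = (Nat.factorial L)^4 * 2^(40*m + (L+1)) := by
          rw [mul_pow, ← pow_mul, pow_add]; ring
      _ ≤ (Nat.factorial L)^4 * 2^(4*k) := by
          apply Nat.mul_le_mul_left
          exact Nat.pow_le_pow_right (by norm_num) hexp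
  exact Nat.le_of_mul_le_mul_right main (by positivity)

lemma exists_expander (L : ℕ) (hL : 1500 ≤ L) :
    ∃ π : Fin 4 → Equiv.Perm (Fin L),
      ∀ T : Finset (Fin L), 2*L ≤ 5*T.card → 2*T.card ≤ L →
        ∃ i, L ≤ 300 * ((T.filter fun a => π i a ∉ T)).card := by
  classical
  set bad : Finset (Fin 4 → Equiv.Perm (Fin L)) :=
    univ.filter (fun πv => ∃ T : Finset (Fin L), (2*L ≤ 5*T.card ∧ 2*T.card ≤ L) ∧
      ∀ i, (T.card - T.card/100) ≤ ((T.filter fun a => πv i a ∈ T)).card) with hbad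
  set TT : Finset (Finset (Fin L)) :=
    univ.filter (fun T : Finset (Fin L) => 2*L ≤ 5*T.card ∧ 2*T.card ≤ L) with hTT
  have hcover : bad ⊆ TT.biUnion
      (fun T => Fintype.piFinset (fun _ : Fin 4 =>
         univ.filter fun π : Equiv.Perm (Fin L) =>
           (T.card - T.card/100) ≤ ((T.filter fun a => π a ∈ T)).card)) := by
    intro πv hπv
    simp only [hbad, mem_filter, mem_univ, true_and] at hπv
    obtain ⟨T, hcond, hall⟩ := hπv
    refine mem_biUnion.2 ⟨T, ?_, ?_⟩
    · simp only [hTT, mem_filter, mem_univ, true_and]; exact hcond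
    · rw [Fintype.mem_piFinset]
      intro i
      simp only [mem_filter, mem_univ, true_and]
      exact hall i
  have hTTcard : TT.card ≤ 2^L := by
    calc TT.card ≤ (univ : Finset (Finset (Fin L))).card := card_le_card (filter_subset _ _)
      _ = 2^L := by rw [card_univ, Fintype.card_finset, Fintype.card_fin]
  have hfactpos : 1 ≤ (Nat.factorial L)^4 := Nat.one_le_iff_ne_zero.2 (by positivity)
  have hcard2 : bad.card * 2^(L+1) ≤ 2^L * (Nat.factorial L)^4 := by
    calc bad.card * 2^(L+1)
        ≤ (∑ T ∈ TT, (Fintype.piFinset (fun _ : Fin 4 =>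
            univ.filter fun π : Equiv.Perm (Fin L) =>
              (T.card - T.card/100) ≤ ((T.filter fun a => π a ∈ T)).card)).card) * 2^(L+1) :=
          Nat.mul_le_mul_right _ ((card_le_card hcover).trans card_biUnion_le)
      _ = ∑ T ∈ TT, ((univ.filter fun π : Equiv.Perm (Fin L) =>
              (T.card - T.card/100) ≤ ((T.filter fun a => π a ∈ T)).card).card)^4 * 2^(L+1) := by
          rw [Finset.sum_mul]
          apply Finset.sum_congr rfl
          intro T _
          congr 1
          rw [Fintype.card_piFinset]
          rw [Finset.prod_const, card_univ, Fintype.card_fin]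
      _ ≤ ∑ _T ∈ TT, (Nat.factorial L)^4 := by
          apply Finset.sum_le_sum
          intro T hT
          simp only [hTT, mem_filter, mem_univ, true_and] at hT
          exact perT hL T hT.1 hT.2
      _ = TT.card * (Nat.factorial L)^4 := by rw [Finset.sum_const, smul_eq_mul]
      _ ≤ 2^L * (Nat.factorial L)^4 := Nat.mul_le_mul_right _ hTTcard
  have hlt : bad.card < (Nat.factorial L)^4 := by
    have h2 : 2^(L+1) = 2 * 2^L := by rw [pow_succ]; ring
    rw [h2] at hcard2
    have : bad.card * 2 ≤ (Nat.factorial L)^4 := by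
      have hpos : 0 < 2^L := by positivity
      have := Nat.le_of_mul_le_mul_right
        (by calc bad.card * 2 * 2^L = bad.card * (2 * 2^L) := by ring
              _ ≤ 2^L * (Nat.factorial L)^4 := hcard2
              _ = (Nat.factorial L)^4 * 2^L := by ring) hpos
      exact this
    omega
  have huniv : (univ : Finset (Fin 4 → Equiv.Perm (Fin L))).card = (Nat.factorial L)^4 := by
    rw [card_univ, Fintype.card_fun, Fintype.card_perm, Fintype.card_fin, Fintype.card_fin]
  have hnsub : ¬ ((univ : Finset (Fin 4 → Equiv.Perm (Fin L))) ⊆ bad) := by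
    intro hsub
    have := card_le_card hsub
    omega
  rw [Finset.not_subset] at hnsub
  obtain ⟨πv, -, hπv⟩ := hnsub
  refine ⟨πv, ?_⟩
  intro T hT1 hT2
  simp only [hbad, mem_filter, mem_univ, true_and, not_exists, not_and, not_forall] at hπv
  obtain ⟨i, hi⟩ := hπv T ⟨hT1, hT2⟩
  refine ⟨i, ?_⟩
  rw [not_le] at hi
  have hsplit := Finset.card_filter_add_card_filter_not
    (s := T) (p := fun a => πv i a ∈ T)
  have hcut : ((T.filter fun a => πv i a ∉ T)).card
      = T.card - ((T.filter fun a => πv i a ∈ T)).card := by omega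
  omega

def Kv (g : ℕ) : ℕ := 2*g + 10

lemma Kv_pos (g : ℕ) : 0 < Kv g := by unfold Kv; omega
lemma Kv_ge {g : ℕ} (hg : 1 ≤ g) : 12 ≤ Kv g := by unfold Kv; omega
lemma KB_pos (g k : ℕ) : 0 < (Kv g)^k := pow_pos (Kv_pos g) k

noncomputable def prm (L : ℕ) : Fin 4 → Equiv.Perm (Fin L) :=
  if h : 1500 ≤ L then (exists_expander L h).choose else fun _ => 1

lemma prm_spec {L : ℕ} (h : 1500 ≤ L) :
    ∀ T : Finset (Fin L), 2*L ≤ 5*T.card → 2*T.card ≤ L →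
      ∃ i, L ≤ 300 * ((T.filter fun a => prm L i a ∉ T)).card := by
  have hp : prm L = (exists_expander L h).choose := by
    unfold prm; rw [dif_pos h]
  rw [hp]
  exact (exists_expander L h).choose_spec

abbrev GV (g : ℕ) := (k : ℕ) × Fin ((Kv g)^k)

def upRel (g : ℕ) (u v : GV g) : Prop :=
  v.1 = u.1 + 1 ∧ (v.2 : ℕ) % (Kv g)^u.1 = (u.2 : ℕ)

def samRel (g : ℕ) (u v : GV g) : Prop :=
  u.1 = v.1 ∧ ∃ i : Fin 4,
    ((prm ((Kv g)^u.1) i u.2 : Fin ((Kv g)^u.1)) : ℕ) = (v.2 : ℕ) ∨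
    ((prm ((Kv g)^v.1) i v.2 : Fin ((Kv g)^v.1)) : ℕ) = (u.2 : ℕ)

noncomputable def GG (g : ℕ) : SimpleGraph (GV g) where
  Adj u v := u ≠ v ∧ (upRel g u v ∨ upRel g v u ∨ samRel g u v)
  symm := by
    refine ⟨?_⟩
    rintro u v ⟨hne, h⟩
    refine ⟨hne.symm, ?_⟩
    rcases h with h | h | h
    · exact Or.inr (Or.inl h)
    · exact Or.inl h
    · obtain ⟨h1, i, hi⟩ := h
      exact Or.inr (Or.inr ⟨h1.symm, i, hi.symm⟩)
  loopless := ⟨fun u h => h.1 rfl⟩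

def oV (g : ℕ) : GV g := ⟨0, ⟨0, KB_pos g 0⟩⟩

lemma adj_layer {g : ℕ} {u v : GV g} (h : (GG g).Adj u v) :
    v.1 = u.1 + 1 ∨ u.1 = v.1 + 1 ∨ u.1 = v.1 := by
  rcases h.2 with h | h | h
  · exact Or.inl h.1
  · exact Or.inr (Or.inl h.1)
  · exact Or.inr (Or.inr h.1)

lemma walk_layer {g : ℕ} {u v : GV g} (w : (GG g).Walk u v) : v.1 ≤ u.1 + w.length := by
  induction w with
  | nil => simp
  | cons h w ih =>
    have := adj_layer h
    rw [SimpleGraph.Walk.length_cons]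
    omega

def parentV {g : ℕ} {k : ℕ} (x : Fin ((Kv g)^(k+1))) : GV g :=
  ⟨k, ⟨(x : ℕ) % (Kv g)^k, Nat.mod_lt _ (KB_pos g k)⟩⟩

lemma adj_parent {g k : ℕ} (x : Fin ((Kv g)^(k+1))) :
    (GG g).Adj ⟨k+1, x⟩ (parentV x) := by
  refine ⟨?_, Or.inr (Or.inl ⟨rfl, rfl⟩)⟩
  intro h
  have := congrArg Sigma.fst h
  simp [parentV] at this

lemma sigma_mk_eq {g : ℕ} {k : ℕ} {a b : Fin ((Kv g)^k)} (h : (a:ℕ) = (b:ℕ)) :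
    (⟨k, a⟩ : GV g) = ⟨k, b⟩ := congrArg (Sigma.mk k) (Fin.ext h)

lemma zero_eq_o {g : ℕ} (x : Fin ((Kv g)^0)) : (⟨0, x⟩ : GV g) = oV g := by
  have hx : (x : ℕ) = 0 := by
    have := x.isLt
    simpa [pow_zero, Nat.lt_one_iff] using this
  exact sigma_mk_eq hx

lemma reach_o {g : ℕ} : ∀ (k : ℕ) (x : Fin ((Kv g)^k)), (GG g).Reachable ⟨k, x⟩ (oV g) := by
  intro k
  induction k with
  | zero => intro x; rw [zero_eq_o x]
  | succ k ih =>
    intro x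
    exact ((adj_parent x).reachable).trans (ih _)

lemma GG_connected (g : ℕ) : (GG g).Connected := by
  rw [SimpleGraph.connected_iff]
  refine ⟨?_, ⟨oV g⟩⟩
  intro u v
  exact (reach_o u.1 u.2).trans (reach_o v.1 v.2).symm

lemma dist_le_layer {g : ℕ} : ∀ (k : ℕ) (x : Fin ((Kv g)^k)),
    (GG g).dist (oV g) ⟨k, x⟩ ≤ k := by
  intro k
  induction k with
  | zero =>
    intro x
    rw [zero_eq_o x, SimpleGraph.dist_self]
  | succ k ih =>
    intro x
    have h1 : (GG g).dist (oV g) (parentV x) ≤ k := ih _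
    have h2 : (GG g).dist (parentV x) ⟨k+1, x⟩ ≤ 1 := by
      have := SimpleGraph.dist_le (SimpleGraph.Walk.cons ((adj_parent x).symm) SimpleGraph.Walk.nil)
      simpa using this
    have h3 := (GG_connected g).dist_triangle (v := parentV x) (u := oV g) (w := ⟨k+1, x⟩)
    omega

lemma dist_eq_layer {g : ℕ} (k : ℕ) (x : Fin ((Kv g)^k)) :
    (GG g).dist (oV g) ⟨k, x⟩ = k := by
  have hub := dist_le_layer k x
  have hreach : (GG g).Reachable (oV g) ⟨k,x⟩ := (reach_o k x).symm
  obtain ⟨p, hp⟩ := hreach.exists_walk_length_eq_dist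
  have hlb := walk_layer p
  simp only [oV] at hlb
  change k ≤ 0 + p.length at hlb
  omega

lemma up_bound {g : ℕ} (u : GV g) (j : Fin (Kv g)) :
    (u.2 : ℕ) + (j : ℕ) * (Kv g)^u.1 < (Kv g)^(u.1+1) := by
  have h1 := u.2.isLt
  have h2 := j.isLt
  have hB := KB_pos g u.1
  rw [pow_succ]
  calc (u.2 : ℕ) + (j : ℕ) * (Kv g)^u.1 < (Kv g)^u.1 + (j:ℕ) * (Kv g)^u.1 := by omega
    _ = ((j:ℕ)+1) * (Kv g)^u.1 := by ring
    _ ≤ (Kv g) * (Kv g)^u.1 := Nat.mul_le_mul_right _ (by omega)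
    _ = (Kv g)^u.1 * (Kv g) := by ring

def upVert {g : ℕ} (u : GV g) (j : Fin (Kv g)) : GV g :=
  ⟨u.1+1, ⟨(u.2 : ℕ) + (j : ℕ) * (Kv g)^u.1, up_bound u j⟩⟩

def upFin {g : ℕ} (u : GV g) : Finset (GV g) :=
  (univ : Finset (Fin (Kv g))).image (upVert u)

def downFin {g : ℕ} (u : GV g) : Finset (GV g) :=
  {⟨u.1 - 1, ⟨(u.2:ℕ) % (Kv g)^(u.1-1), Nat.mod_lt _ (KB_pos g _)⟩⟩}

noncomputable def samFin {g : ℕ} (u : GV g) : Finset (GV g) :=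
  ((univ : Finset (Fin 4)).image fun i => ⟨u.1, prm ((Kv g)^u.1) i u.2⟩) ∪
  ((univ : Finset (Fin 4)).image fun i => ⟨u.1, (prm ((Kv g)^u.1) i)⁻¹ u.2⟩)

noncomputable def nbhdFin {g : ℕ} (u : GV g) : Finset (GV g) := (upFin u ∪ downFin u) ∪ samFin u

lemma adj_up {g : ℕ} (u : GV g) (j : Fin (Kv g)) : (GG g).Adj u (upVert u j) := by
  refine ⟨?_, Or.inl ⟨rfl, ?_⟩⟩
  · intro h
    have := congrArg Sigma.fst h
    simp [upVert] at this
  · show ((u.2 : ℕ) + (j : ℕ) * (Kv g)^u.1) % (Kv g)^u.1 = (u.2 : ℕ)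
    rw [Nat.add_mul_mod_self_right]
    exact Nat.mod_eq_of_lt u.2.isLt

lemma upVert_inj {g : ℕ} (u : GV g) : Function.Injective (upVert (g := g) u) := by
  intro j j' h
  have h2 := congrArg (fun w : GV g => (w.2 : ℕ)) h
  simp only [upVert] at h2
  have hB := KB_pos g u.1
  have : (j:ℕ) = (j':ℕ) := by
    have := Nat.eq_of_mul_eq_mul_right hB (by omega : (j:ℕ) * (Kv g)^u.1 = (j':ℕ) * (Kv g)^u.1)
    exact this
  exact Fin.ext this

lemma adj_mem_nbhd {g : ℕ} {u v : GV g} (h : (GG g).Adj u v) : v ∈ nbhdFin u := by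
  obtain ⟨k, x⟩ := u
  obtain ⟨l, y⟩ := v
  rcases h.2 with hr | hr | hr
  · obtain ⟨hl, hm⟩ := hr
    simp only at hl hm
    subst hl
    apply mem_union_left; apply mem_union_left
    rw [upFin, mem_image]
    have hB := KB_pos g k
    have hylt : (y:ℕ) < (Kv g)^k * (Kv g) := lt_of_lt_of_eq y.isLt (pow_succ _ _)
    refine ⟨⟨(y:ℕ) / (Kv g)^k, ?_⟩, mem_univ _, ?_⟩
    · exact Nat.div_lt_of_lt_mul (by omega)
    · unfold upVert
      apply sigma_mk_eq
      show (x:ℕ) + ((y:ℕ) / (Kv g)^k) * (Kv g)^k = (y:ℕ)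
      rw [← hm, mul_comm]
      exact Nat.mod_add_div (y:ℕ) ((Kv g)^k)
  · obtain ⟨hk, hm⟩ := hr
    simp only at hk hm
    subst hk
    apply mem_union_left; apply mem_union_right
    rw [downFin, mem_singleton]
    exact sigma_mk_eq hm.symm
  · obtain ⟨hl, i, hi⟩ := hr
    simp only at hl
    subst hl
    apply mem_union_right
    rw [samFin, mem_union]
    rcases hi with hi | hi
    · left
      rw [mem_image]
      exact ⟨i, mem_univ _, sigma_mk_eq hi⟩
    · right
      rw [mem_image]
      refine ⟨i, mem_univ _, sigma_mk_eq ?_⟩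
      have hyx : prm ((Kv g)^k) i y = x := Fin.ext hi
      show (((prm ((Kv g)^k) i)⁻¹ x : Fin _) : ℕ) = (y : ℕ)
      rw [← hyx, ← Equiv.Perm.mul_apply, inv_mul_cancel, Equiv.Perm.one_apply]

lemma card_nbhd {g : ℕ} (u : GV g) : (nbhdFin u).card ≤ Kv g + 9 := by
  have h1 : (upFin u).card ≤ Kv g := by
    calc (upFin u).card ≤ (univ : Finset (Fin (Kv g))).card := card_image_le
      _ = Kv g := by rw [card_univ, Fintype.card_fin]
  have h2 : (downFin u).card = 1 := card_singleton _
  have h3 : (samFin u).card ≤ 8 := by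
    calc (samFin u).card ≤ ((univ : Finset (Fin 4)).image fun i =>
          (⟨u.1, prm ((Kv g)^u.1) i u.2⟩ : GV g)).card +
          ((univ : Finset (Fin 4)).image fun i =>
          (⟨u.1, (prm ((Kv g)^u.1) i)⁻¹ u.2⟩ : GV g)).card := card_union_le _ _
      _ ≤ 4 + 4 := by
          apply Nat.add_le_add
          · calc _ ≤ (univ : Finset (Fin 4)).card := card_image_le
              _ = 4 := by rw [card_univ, Fintype.card_fin]
          · calc _ ≤ (univ : Finset (Fin 4)).card := card_image_le
              _ = 4 := by rw [card_univ, Fintype.card_fin]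
  calc (nbhdFin u).card ≤ (upFin u ∪ downFin u).card + (samFin u).card := card_union_le _ _
    _ ≤ ((upFin u).card + (downFin u).card) + (samFin u).card :=
        Nat.add_le_add_right (card_union_le _ _) _
    _ ≤ Kv g + 9 := by omega

noncomputable def hlfG (g : ℕ) : (GG g).LocallyFinite := fun u =>
  Set.Finite.fintype (Set.Finite.subset (nbhdFin u).finite_toSet
    (fun v hv => by
      rw [Finset.mem_coe]
      exact adj_mem_nbhd hv))

lemma mem_nbr {g : ℕ} {u v : GV g} :
    v ∈ IsingGlauber.nbr (GG g) (hlfG g) u ↔ (GG g).Adj u v := by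
  rw [IsingGlauber.nbr]
  exact @SimpleGraph.mem_neighborFinset _ (GG g) u (hlfG g u) v

lemma card_samFin {g : ℕ} (u : GV g) : (samFin u).card ≤ 8 := by
  calc (samFin u).card ≤ ((univ : Finset (Fin 4)).image fun i =>
        (⟨u.1, prm ((Kv g)^u.1) i u.2⟩ : GV g)).card +
        ((univ : Finset (Fin 4)).image fun i =>
        (⟨u.1, (prm ((Kv g)^u.1) i)⁻¹ u.2⟩ : GV g)).card := card_union_le _ _
    _ ≤ 4 + 4 := by
        apply Nat.add_le_add
        · calc _ ≤ (univ : Finset (Fin 4)).card := card_image_le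
            _ = 4 := by rw [card_univ, Fintype.card_fin]
        · calc _ ≤ (univ : Finset (Fin 4)).card := card_image_le
            _ = 4 := by rw [card_univ, Fintype.card_fin]
    _ = 8 := by norm_num

lemma deg_le (g : ℕ) (u : GV g) :
    (IsingGlauber.nbr (GG g) (hlfG g) u).card ≤ Kv g + 9 := by
  refine le_trans (card_le_card ?_) (card_nbhd u)
  intro v hv
  exact adj_mem_nbhd (mem_nbr.1 hv)

lemma dist_upVert {g : ℕ} (u : GV g) (j : Fin (Kv g)) :
    (GG g).dist (oV g) (upVert u j) = u.1 + 1 :=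
  dist_eq_layer (u.1+1) _

lemma dist_sigma_eta {g : ℕ} (u : GV g) : (GG g).dist (oV g) u = u.1 := by
  have := dist_eq_layer (g := g) u.1 u.2
  rwa [Sigma.eta] at this

lemma growing (g : ℕ) : IsingGlauber.IsGrowing (GG g) (hlfG g) g (oV g) := by
  intro u
  have hdu : (GG g).dist (oV g) u = u.1 := dist_sigma_eta u
  have hupcard : Kv g ≤ ((IsingGlauber.nbr (GG g) (hlfG g) u).filter
      (fun z => (GG g).dist (oV g) z = (GG g).dist (oV g) u + 1)).card := by
    have hsub : upFin u ⊆ (IsingGlauber.nbr (GG g) (hlfG g) u).filter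
        (fun z => (GG g).dist (oV g) z = (GG g).dist (oV g) u + 1) := by
      intro v hv
      obtain ⟨j, -, rfl⟩ := mem_image.1 hv
      rw [mem_filter]
      refine ⟨mem_nbr.2 (adj_up u j), ?_⟩
      rw [hdu, dist_upVert]
    calc Kv g = (upFin u).card := by
          rw [upFin, card_image_of_injective _ (upVert_inj u), card_univ, Fintype.card_fin]
      _ ≤ _ := card_le_card hsub
  have hlowcard : ((IsingGlauber.nbr (GG g) (hlfG g) u).filter
      (fun z => (GG g).dist (oV g) z ≤ (GG g).dist (oV g) u)).card ≤ 9 := by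
    have hsub : ((IsingGlauber.nbr (GG g) (hlfG g) u).filter
        (fun z => (GG g).dist (oV g) z ≤ (GG g).dist (oV g) u)) ⊆ downFin u ∪ samFin u := by
      intro v hv
      rw [mem_filter] at hv
      have hadj := mem_nbr.1 hv.1
      have hv2 := hv.2
      have hmem := adj_mem_nbhd hadj
      rw [nbhdFin, mem_union, mem_union] at hmem
      rcases hmem with (hup | hdown) | hsam
      · exfalso
        obtain ⟨j, -, rfl⟩ := mem_image.1 hup
        rw [hdu, dist_upVert] at hv2
        omega
      · exact mem_union_left _ hdown
      · exact mem_union_right _ hsam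
    calc ((IsingGlauber.nbr (GG g) (hlfG g) u).filter
        (fun z => (GG g).dist (oV g) z ≤ (GG g).dist (oV g) u)).card
        ≤ (downFin u ∪ samFin u).card := card_le_card hsub
      _ ≤ (downFin u).card + (samFin u).card := card_union_le _ _
      _ ≤ 1 + 8 := Nat.add_le_add (le_of_eq (card_singleton _)) (card_samFin u)
      _ = 9 := by norm_num
  have hK : Kv g = 2*g + 10 := rfl
  omega

lemma infinite_GV (g : ℕ) : Infinite (GV g) :=
  Infinite.of_injective (fun k : ℕ => (⟨k, ⟨0, KB_pos g k⟩⟩ : GV g))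
    (fun a b h => congrArg Sigma.fst h)

def ballF (g r : ℕ) : Finset (GV g) :=
  (Finset.range (r+1)).sigma (fun k => (univ : Finset (Fin ((Kv g)^k))))

lemma mem_ballF {g r : ℕ} (v : GV g) : v ∈ ballF g r ↔ v.1 ≤ r := by
  obtain ⟨k,x⟩ := v
  simp [ballF, Finset.mem_sigma, Finset.mem_range, Nat.lt_succ_iff]

lemma ballF_eq {g r : ℕ} (Br : Finset (GV g))
    (hBr : ∀ v, v ∈ Br ↔ (GG g).dist (oV g) v ≤ r) : Br = ballF g r := by
  ext v
  rw [hBr, mem_ballF, dist_sigma_eta]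

lemma card_ballF (g r : ℕ) : (ballF g r).card = ∑ k ∈ Finset.range (r+1), (Kv g)^k := by
  rw [ballF, Finset.card_sigma]
  simp

lemma geom_le {g : ℕ} (hg : 1 ≤ g) :
    ∀ r : ℕ, 11 * (∑ k ∈ Finset.range r, (Kv g)^k) ≤ (Kv g)^r := by
  intro r
  induction r with
  | zero => simp
  | succ r ih =>
    rw [Finset.sum_range_succ, pow_succ]
    have hK := Kv_ge hg
    have hKp := KB_pos g r
    calc 11 * ((∑ k ∈ Finset.range r, (Kv g)^k) + (Kv g)^r)
        = 11 * (∑ k ∈ Finset.range r, (Kv g)^k) + 11 * (Kv g)^r := by ring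
      _ ≤ (Kv g)^r + 11 * (Kv g)^r := by omega
      _ = 12 * (Kv g)^r := by ring
      _ ≤ (Kv g)^r * Kv g := by
          calc 12 * (Kv g)^r = (Kv g)^r * 12 := by ring
            _ ≤ (Kv g)^r * Kv g := Nat.mul_le_mul_left _ hK

lemma ball_odd (g r : ℕ) : ∃ t, (ballF g r).card = 2*t + 1 := by
  rw [card_ballF]
  refine ⟨(g+5) * ∑ k ∈ Finset.range r, (Kv g)^k, ?_⟩
  rw [Finset.sum_range_succ']
  have h1 : ∀ k, (Kv g)^(k+1) = (2*(g+5)) * (Kv g)^k := by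
    intro k
    rw [pow_succ]
    have : Kv g = 2*(g+5) := by unfold Kv; ring
    rw [this]; ring
  have h2 : ∑ k ∈ Finset.range r, (Kv g)^(k+1)
      = (2*(g+5)) * ∑ k ∈ Finset.range r, (Kv g)^k := by
    rw [Finset.mul_sum]
    exact Finset.sum_congr rfl (fun k _ => h1 k)
  rw [h2, pow_zero]
  ring

/-! ### Generic Gibbs lemmas -/

section Gibbs

variable {W : Type*} [DecidableEq W]

lemma pi_mem_true (A : Finset W) :
    (fun a _ => true) ∈ A.pi (fun _ => (Finset.univ : Finset Bool)) := by
  rw [Finset.mem_pi]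
  intro a ha
  exact Finset.mem_univ _

lemma wsum_one_pos (E : (W → Bool) → ℝ) (A : Finset W) (η : W → Bool) :
    0 < wsum E A η (fun _ => 1) := by
  rw [wsum]
  apply Finset.sum_pos
  · intro p _
    simpa using Real.exp_pos _
  · exact ⟨fun a _ => true, pi_mem_true A⟩

lemma wsum_mono (E : (W → Bool) → ℝ) (A : Finset W) (η : W → Bool) {f h : (W → Bool) → ℝ}
    (hfh : ∀ p ∈ A.pi (fun _ => (Finset.univ : Finset Bool)),
      f (patch A η p) ≤ h (patch A η p)) :
    wsum E A η f ≤ wsum E A η h := by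
  apply Finset.sum_le_sum
  intro p hp
  exact mul_le_mul_of_nonneg_left (hfh p hp) (le_of_lt (Real.exp_pos _))

lemma wsum_nonneg (E : (W → Bool) → ℝ) (A : Finset W) (η : W → Bool) {f : (W → Bool) → ℝ}
    (hf : ∀ p ∈ A.pi (fun _ => (Finset.univ : Finset Bool)), 0 ≤ f (patch A η p)) :
    0 ≤ wsum E A η f :=
  Finset.sum_nonneg fun p hp => mul_nonneg (Real.exp_pos _).le (hf p hp)

lemma wsum_congr (E : (W → Bool) → ℝ) (A : Finset W) (η : W → Bool) {f h : (W → Bool) → ℝ}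
    (hfh : ∀ p ∈ A.pi (fun _ => (Finset.univ : Finset Bool)),
      f (patch A η p) = h (patch A η p)) :
    wsum E A η f = wsum E A η h :=
  Finset.sum_congr rfl fun p hp => by rw [hfh p hp]

lemma wsum_mul_const (E : (W → Bool) → ℝ) (A : Finset W) (η : W → Bool) (c : ℝ)
    (f : (W → Bool) → ℝ) :
    wsum E A η (fun σ => c * f σ) = c * wsum E A η f := by
  rw [wsum, wsum, Finset.mul_sum]
  apply Finset.sum_congr rfl
  intro p _
  ring

lemma gExp_bounds (E : (W → Bool) → ℝ) (A : Finset W) (η : W → Bool) {f : (W → Bool) → ℝ}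
    (h0 : ∀ σ, 0 ≤ f σ) (h1 : ∀ σ, f σ ≤ 1) :
    0 ≤ gExp E A η f ∧ gExp E A η f ≤ 1 := by
  have hd := wsum_one_pos E A η
  constructor
  · exact div_nonneg (wsum_nonneg E A η (fun p _ => h0 _)) hd.le
  · rw [gExp, div_le_one hd]
    exact wsum_mono E A η (fun p _ => h1 _)

lemma gExp_sq_eq (E : (W → Bool) → ℝ) (A : Finset W) (η : W → Bool) {f : (W → Bool) → ℝ}
    (hf : ∀ σ, f σ = 0 ∨ f σ = 1) :
    gExp E A η (fun σ => f σ ^ 2) = gExp E A η f := by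
  rw [gExp, gExp]
  congr 1
  apply wsum_congr
  intro p _
  rcases hf (patch A η p) with h | h <;> rw [h] <;> norm_num

lemma gVar_indicator_le (E : (W → Bool) → ℝ) (A : Finset W) (η : W → Bool)
    {f : (W → Bool) → ℝ} (hf : ∀ σ, f σ = 0 ∨ f σ = 1) :
    gVar E A η f ≤ 1/4 := by
  rw [gVar, gExp_sq_eq E A η hf]
  have h0 : ∀ σ, 0 ≤ f σ := fun σ => by rcases hf σ with h | h <;> rw [h] <;> norm_num
  have h1 : ∀ σ, f σ ≤ 1 := fun σ => by rcases hf σ with h | h <;> rw [h] <;> norm_num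
  obtain ⟨hb0, hb1⟩ := gExp_bounds E A η h0 h1
  nlinarith [sq_nonneg (gExp E A η f - 1/2)]

lemma gVar_const (E : (W → Bool) → ℝ) (A : Finset W) (η : W → Bool)
    {f : (W → Bool) → ℝ} {c : ℝ}
    (hf : ∀ p ∈ A.pi (fun _ => (Finset.univ : Finset Bool)), f (patch A η p) = c) :
    gVar E A η f = 0 := by
  have hd := wsum_one_pos E A η
  have h1 : wsum E A η f = c * wsum E A η (fun _ => 1) := by
    rw [← wsum_mul_const E A η c (fun _ => 1)]
    apply wsum_congr
    intro p hp
    rw [hf p hp]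
    ring
  have h2 : wsum E A η (fun σ => f σ ^ 2) = c^2 * wsum E A η (fun _ => 1) := by
    rw [← wsum_mul_const E A η (c^2) (fun _ => 1)]
    apply wsum_congr
    intro p hp
    rw [hf p hp]
    ring
  rw [gVar, gExp, gExp, h1, h2]
  field_simp
  ring

/-! ### Magnetisation and majority function -/

/-- The magnetisation over `B`. -/
def mag (B : Finset W) (σ : W → Bool) : ℝ := ∑ v ∈ B, spin (σ v)

/-- The majority indicator. -/
def fMaj (B : Finset W) (σ : W → Bool) : ℝ := if 0 < mag B σ then 1 else 0

/-- Indicator of a near-tie. -/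
def chiB (B : Finset W) (σ : W → Bool) : ℝ := if (mag B σ)^2 ≤ 1 then 1 else 0

lemma fMaj_01 (B : Finset W) : ∀ σ, fMaj B σ = 0 ∨ fMaj B σ = 1 := by
  intro σ
  rw [fMaj]
  by_cases h : 0 < mag B σ
  · right; rw [if_pos h]
  · left; rw [if_neg h]

lemma chiB_nonneg (B : Finset W) (σ : W → Bool) : 0 ≤ chiB B σ := by
  rw [chiB]
  by_cases h : (mag B σ)^2 ≤ 1
  · rw [if_pos h]; norm_num
  · rw [if_neg h]

lemma spin_sum_count (B : Finset W) (σ : W → Bool) :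
    mag B σ + (B.card : ℝ) = 2 * ((B.filter fun v => σ v = true).card : ℝ) := by
  have hsplit := Finset.sum_filter_add_sum_filter_not B (fun v => σ v = true)
    (fun v => spin (σ v))
  have h1 : ∑ v ∈ B.filter (fun v => σ v = true), spin (σ v)
      = ((B.filter fun v => σ v = true).card : ℝ) := by
    have hone : ∀ v ∈ B.filter (fun v => σ v = true), spin (σ v) = 1 := by
      intro v hv
      rw [(Finset.mem_filter.1 hv).2]
      rfl
    rw [Finset.sum_congr rfl hone, Finset.sum_const, nsmul_eq_mul, mul_one]
  have h2 : ∑ v ∈ B.filter (fun v => ¬ σ v = true), spin (σ v)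
      = -(((B.filter fun v => ¬ σ v = true).card : ℝ)) := by
    have hmone : ∀ v ∈ B.filter (fun v => ¬ σ v = true), spin (σ v) = -1 := by
      intro v hv
      have hv2 := (Finset.mem_filter.1 hv).2
      have hvf : σ v = false := by
        cases hσ : σ v
        · rfl
        · exact absurd hσ hv2
      rw [hvf]
      rfl
    rw [Finset.sum_congr rfl hmone, Finset.sum_const, nsmul_eq_mul]
    ring
  have hcards := Finset.card_filter_add_card_filter_not
    (s := B) (p := fun v => σ v = true)
  rw [mag, ← hsplit, h1, h2]
  have : ((B.filter fun v => σ v = true).card : ℝ)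
      + ((B.filter fun v => ¬ σ v = true).card : ℝ) = (B.card : ℝ) := by
    exact_mod_cast congrArg (fun n : ℕ => (n : ℝ)) hcards
  linarith

lemma mag_ne (B : Finset W) (hodd : ∃ t, B.card = 2*t+1) (σ : W → Bool) :
    mag B σ ≠ 0 := by
  obtain ⟨t, ht⟩ := hodd
  intro h0
  have := spin_sum_count B σ
  rw [h0, zero_add, ht] at this
  have : (2*t+1 : ℕ) = 2 * (B.filter fun v => σ v = true).card := by
    exact_mod_cast this
  omega

lemma mag_update (B : Finset W) (x : W) (hx : x ∈ B) (σ : W → Bool) (b : Bool) :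
    mag B (Function.update σ x b)
      = spin b + ∑ v ∈ B.erase x, spin (σ v) := by
  rw [mag, ← Finset.add_sum_erase B _ hx, Function.update_self]
  congr 1
  apply Finset.sum_congr rfl
  intro v hv
  rw [Function.update_of_ne (Finset.mem_erase.1 hv).1]

lemma mag_erase_split (B : Finset W) (x : W) (hx : x ∈ B) (σ : W → Bool) :
    mag B σ = spin (σ x) + ∑ v ∈ B.erase x, spin (σ v) := by
  rw [mag, ← Finset.add_sum_erase B _ hx]

lemma patch_singleton (x : W) (σ : W → Bool) (p : ∀ a ∈ ({x} : Finset W), Bool) :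
    patch {x} σ p = Function.update σ x (p x (Finset.mem_singleton_self x)) := by
  funext v
  rw [patch]
  by_cases hv : v = x
  · subst hv
    rw [dif_pos (Finset.mem_singleton_self v), Function.update_self]
  · rw [dif_neg (by simp [hv]), Function.update_of_ne hv]

lemma spin_sq (b : Bool) : spin b = 1 ∨ spin b = -1 := by
  cases b
  · right; rfl
  · left; rfl

/-- The key one-site conditional variance estimate. -/
lemma condvar_le (E : (W → Bool) → ℝ) (B : Finset W) (hodd : ∃ t, B.card = 2*t+1)
    (x : W) (hx : x ∈ B) (σ : W → Bool) :
    gVar E {x} σ (fMaj B) ≤ (1/4) * chiB B σ := by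
  classical
  obtain ⟨s, hs⟩ := hodd
  set c : ℝ := ∑ v ∈ B.erase x, spin (σ v) with hc
  have hec : (B.erase x).card = 2*s := by
    rw [Finset.card_erase_of_mem hx, hs]
    omega
  have hcount := spin_sum_count (B.erase x) σ
  rw [hec] at hcount
  set t' : ℕ := ((B.erase x).filter fun v => σ v = true).card with ht'
  have hcform : c + (2*s : ℝ) = 2 * (t' : ℝ) := by
    rw [hc]
    exact_mod_cast hcount
  by_cases hc0 : c = 0
  · -- near tie : χ = 1 and the variance of an indicator is at most 1/4
    have hchi : chiB B σ = 1 := by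
      rw [chiB, if_pos]
      rw [mag_erase_split B x hx σ, ← hc, hc0, add_zero]
      rcases spin_sq (σ x) with h | h <;> rw [h] <;> norm_num
    rw [hchi, mul_one]
    exact gVar_indicator_le E {x} σ (fMaj_01 B)
  · -- no tie possible : flipping the spin at x does not change the majority side
    have heven : ∃ m : ℤ, (c : ℝ) = 2 * (m : ℝ) := by
      refine ⟨(t' : ℤ) - (s : ℤ), ?_⟩
      push_cast
      linarith
    obtain ⟨m, hm⟩ := heven
    have hm0 : m ≠ 0 := by
      intro h
      rw [h] at hm
      simp at hm
      exact hc0 hm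
    have hbig : c ≥ 2 ∨ c ≤ -2 := by
      rcases lt_or_gt_of_ne hm0 with h | h
      · right
        have hm1 : m ≤ -1 := by omega
        have : (m : ℝ) ≤ -1 := by exact_mod_cast hm1
        rw [hm]; linarith
      · left
        have : (1 : ℝ) ≤ (m : ℝ) := by exact_mod_cast h
        rw [hm]; linarith
    have hconst : ∀ p ∈ ({x} : Finset W).pi (fun _ => (Finset.univ : Finset Bool)),
        fMaj B (patch {x} σ p) = fMaj B (Function.update σ x true) := by
      intro p _
      rw [patch_singleton x σ p]
      have hval : ∀ b : Bool, fMaj B (Function.update σ x b)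
          = fMaj B (Function.update σ x true) := by
        intro b
        rw [fMaj, fMaj, mag_update B x hx σ b, mag_update B x hx σ true]
        rcases hbig with hb | hb
        · rw [if_pos, if_pos]
          · rcases spin_sq true with h | h <;> rw [h] <;> linarith
          · rcases spin_sq b with h | h <;> rw [h] <;> linarith
        · rw [if_neg, if_neg]
          · rcases spin_sq true with h | h <;> rw [h] <;> push_neg <;> linarith
          · rcases spin_sq b with h | h <;> rw [h] <;> push_neg <;> linarith
      exact hval _
    have h0 : gVar E {x} σ (fMaj B) = 0 := gVar_const E {x} σ hconst
    rw [h0]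
    have := chiB_nonneg B σ
    linarith

end Gibbs

/-! ### Spin flip symmetry and Peierls-type bounds -/

section Flip

variable {W : Type*} [DecidableEq W]

lemma spin_not (b : Bool) : spin (!b) = - spin b := by
  cases b <;> simp [spin]

lemma energyF_congr (G : SimpleGraph W) (B : Finset W) {σ₁ σ₂ : W → Bool}
    (h : ∀ v ∈ B, σ₁ v = σ₂ v) : energyF G B σ₁ = energyF G B σ₂ := by
  rw [energyF, energyF]
  congr 1
  apply Finset.sum_congr rfl
  intro x hx
  apply Finset.sum_congr rfl
  intro y hy
  rw [h x hx, h y (Finset.mem_of_mem_filter y hy)]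

lemma energyF_flip (G : SimpleGraph W) (B : Finset W) (σ : W → Bool) :
    energyF G B (fun v => !(σ v)) = energyF G B σ := by
  rw [energyF, energyF]
  congr 1
  apply Finset.sum_congr rfl; intro x _
  apply Finset.sum_congr rfl; intro y _
  rw [spin_not, spin_not]
  ring

lemma mag_flip (B : Finset W) (σ : W → Bool) : mag B (fun v => !(σ v)) = - mag B σ := by
  rw [mag, mag, ← Finset.sum_neg_distrib]
  apply Finset.sum_congr rfl
  intro v _
  rw [spin_not]

lemma patch_flip_on (A : Finset W) (η : W → Bool) (p : ∀ a ∈ A, Bool) (v : W) (hv : v ∈ A) :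
    patch A η (fun a ha => !(p a ha)) v = !(patch A η p v) := by
  rw [patch, patch, dif_pos hv, dif_pos hv]

lemma gExp_fMaj_half (G : SimpleGraph W) (β : ℝ) (B : Finset W) (η : W → Bool)
    (hodd : ∃ t, B.card = 2*t+1) :
    gExp (fun σ => β * energyF G B σ) B η (fMaj B) = 1/2 := by
  set E : (W → Bool) → ℝ := fun σ => β * energyF G B σ with hE
  have hflipmem : ∀ (p : ∀ a ∈ B, Bool), p ∈ B.pi (fun _ => (univ : Finset Bool)) →
      (fun a ha => !(p a ha)) ∈ B.pi (fun _ => (univ : Finset Bool)) :=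
    fun p _ => by rw [Finset.mem_pi]; intro a ha; exact mem_univ _
  have hinv : ∀ (p : ∀ a ∈ B, Bool), (fun a ha => !(!(p a ha))) = p := by
    intro p; funext a ha; rw [Bool.not_not]
  have key : wsum E B η (fMaj B) = wsum E B η (fun σ => 1 - fMaj B σ) := by
    rw [wsum, wsum]
    refine Finset.sum_bij' (fun p _ => (fun a ha => !(p a ha)))
      (fun p _ => (fun a ha => !(p a ha))) hflipmem hflipmem
      (fun p hp => hinv p) (fun p hp => hinv p) ?_
    intro p hp
    have hE1 : E (patch B η (fun a ha => !(p a ha))) = E (patch B η p) := by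
      rw [hE]
      simp only
      congr 1
      calc energyF G B (patch B η (fun a ha => !(p a ha)))
          = energyF G B (fun v => !(patch B η p v)) :=
            energyF_congr G B (fun v hv => patch_flip_on B η p v hv)
        _ = energyF G B (patch B η p) := energyF_flip G B _
    have hmagf : mag B (patch B η (fun a ha => !(p a ha))) = - mag B (patch B η p) := by
      calc mag B (patch B η (fun a ha => !(p a ha)))
          = mag B (fun v => !(patch B η p v)) := by
            rw [mag, mag]
            exact Finset.sum_congr rfl (fun v hv => by rw [patch_flip_on B η p v hv])
        _ = - mag B (patch B η p) := mag_flip B _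
    have hne := mag_ne B hodd (patch B η p)
    have hfm : fMaj B (patch B η (fun a ha => !(p a ha))) = 1 - fMaj B (patch B η p) := by
      rw [fMaj, fMaj, hmagf]
      rcases lt_or_gt_of_ne hne with h | h
      · rw [if_pos (by linarith), if_neg (by linarith)]
        norm_num
      · rw [if_neg (by linarith), if_pos h]
        norm_num
    rw [hE1, hfm]
    ring
  have hsub : wsum E B η (fun σ => 1 - fMaj B σ)
      = wsum E B η (fun _ => 1) - wsum E B η (fMaj B) := by
    rw [wsum, wsum, wsum, ← Finset.sum_sub_distrib]
    apply Finset.sum_congr rfl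
    intro p _
    ring
  have hd := wsum_one_pos E B η
  have h2 : 2 * wsum E B η (fMaj B) = wsum E B η (fun _ => 1) := by
    have hk := key
    rw [hsub] at hk
    linarith
  have hfpos : 0 < wsum E B η (fMaj B) := by linarith
  rw [gExp, ← h2]
  rw [div_eq_iff (by linarith)]
  ring

lemma gVar_fMaj_quarter (G : SimpleGraph W) (β : ℝ) (B : Finset W) (η : W → Bool)
    (hodd : ∃ t, B.card = 2*t+1) :
    gVar (fun σ => β * energyF G B σ) B η (fMaj B) = 1/4 := by
  rw [gVar, gExp_sq_eq _ _ _ (fMaj_01 B), gExp_fMaj_half G β B η hodd]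
  norm_num

lemma gExp_mono (E : (W → Bool) → ℝ) (A : Finset W) (η : W → Bool) {f h : (W → Bool) → ℝ}
    (hfh : ∀ p ∈ A.pi (fun _ => (Finset.univ : Finset Bool)),
      f (patch A η p) ≤ h (patch A η p)) :
    gExp E A η f ≤ gExp E A η h := by
  rw [gExp, gExp]
  exact (div_le_div_iff_of_pos_right (wsum_one_pos E A η)).2 (wsum_mono E A η hfh)

lemma gExp_mul_const (E : (W → Bool) → ℝ) (A : Finset W) (η : W → Bool) (c : ℝ)
    (f : (W → Bool) → ℝ) :
    gExp E A η (fun σ => c * f σ) = c * gExp E A η f := by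
  rw [gExp, gExp, wsum_mul_const]
  ring

lemma dirich_le (G : SimpleGraph W) (β : ℝ) (B : Finset W) (η : W → Bool)
    (hodd : ∃ t, B.card = 2*t+1) :
    dirich (fun σ => β * energyF G B σ) B η (fMaj B)
      ≤ (B.card : ℝ) * ((1/4) * gExp (fun σ => β * energyF G B σ) B η (chiB B)) := by
  set E : (W → Bool) → ℝ := fun σ => β * energyF G B σ with hE
  rw [dirich]
  have hterm : ∀ x ∈ B, gExp E B η (fun σ => gVar E {x} σ (fMaj B))
      ≤ (1/4) * gExp E B η (chiB B) := by
    intro x hx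
    calc gExp E B η (fun σ => gVar E {x} σ (fMaj B))
        ≤ gExp E B η (fun σ => (1/4) * chiB B σ) := by
          apply gExp_mono
          intro p _
          exact condvar_le E B hodd x hx _
      _ = (1/4) * gExp E B η (chiB B) := gExp_mul_const E B η _ _
  calc ∑ x ∈ B, gExp E B η (fun σ => gVar E {x} σ (fMaj B))
      ≤ ∑ _x ∈ B, (1/4) * gExp E B η (chiB B) := Finset.sum_le_sum hterm
    _ = (B.card : ℝ) * ((1/4) * gExp E B η (chiB B)) := by
        rw [Finset.sum_const, nsmul_eq_mul]

lemma patch_true (A : Finset W) :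
    patch A (fun _ => true) (fun a _ => true) = (fun _ => true) := by
  funext v
  rw [patch]
  by_cases hv : v ∈ A
  · rw [dif_pos hv]
  · rw [dif_neg hv]

lemma gExp_chi_le (G : SimpleGraph W) (β : ℝ) (hβ : 0 ≤ β) (B : Finset W) (D : ℝ)
    (hdef : ∀ σ : W → Bool, (mag B σ)^2 ≤ 1 →
      energyF G B σ + D ≤ energyF G B (fun _ => true)) :
    gExp (fun σ => β * energyF G B σ) B (fun _ => true) (chiB B)
      ≤ 2^B.card * Real.exp (-(β * D)) := by
  set E : (W → Bool) → ℝ := fun σ => β * energyF G B σ with hE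
  set wmax : ℝ := Real.exp (β * energyF G B (fun _ => true)) with hwmax
  have hterm : ∀ p ∈ B.pi (fun _ => (Finset.univ : Finset Bool)),
      Real.exp (E (patch B (fun _ => true) p)) * chiB B (patch B (fun _ => true) p)
        ≤ wmax * Real.exp (-(β * D)) := by
    intro p _
    set σ := patch B (fun _ => true) p with hσ
    rw [chiB]
    by_cases hc : (mag B σ)^2 ≤ 1
    · rw [if_pos hc, mul_one]
      have hEσ := hdef σ hc
      have : β * energyF G B σ ≤ β * energyF G B (fun _ => true) - β * D := by nlinarith
      calc Real.exp (E σ) ≤ Real.exp (β * energyF G B (fun _ => true) - β * D) :=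
            Real.exp_le_exp.2 this
        _ = wmax * Real.exp (-(β * D)) := by rw [hwmax, ← Real.exp_add]; ring_nf
    · rw [if_neg hc, mul_zero]
      positivity
  have hnum : wsum E B (fun _ => true) (chiB B)
      ≤ 2^B.card * (wmax * Real.exp (-(β * D))) := by
    rw [wsum]
    calc ∑ p ∈ B.pi (fun _ => (Finset.univ : Finset Bool)),
          Real.exp (E (patch B (fun _ => true) p)) * chiB B (patch B (fun _ => true) p)
        ≤ ∑ _p ∈ B.pi (fun _ => (Finset.univ : Finset Bool)), wmax * Real.exp (-(β * D)) :=
          Finset.sum_le_sum hterm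
      _ = ((B.pi (fun _ => (Finset.univ : Finset Bool))).card : ℝ)
            * (wmax * Real.exp (-(β * D))) := by rw [Finset.sum_const, nsmul_eq_mul]
      _ = 2^B.card * (wmax * Real.exp (-(β * D))) := by
          congr 1
          rw [Finset.card_pi]
          rw [Finset.prod_const]
          norm_num
  have hden : wmax ≤ wsum E B (fun _ => true) (fun _ => 1) := by
    rw [wsum]
    have hmem := pi_mem_true B
    have := Finset.single_le_sum (f := fun p => Real.exp (E (patch B (fun _ => true) p)) * 1)
      (fun p _ => by positivity) hmem
    calc wmax = Real.exp (E (patch B (fun _ => true) (fun a _ => true))) * 1 := by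
          rw [patch_true B, mul_one]
      _ ≤ _ := this
  have hd := wsum_one_pos E B (fun _ => true)
  rw [gExp, div_le_iff₀ hd]
  calc wsum E B (fun _ => true) (chiB B)
      ≤ 2^B.card * (wmax * Real.exp (-(β * D))) := hnum
    _ = (2^B.card * Real.exp (-(β * D))) * wmax := by ring
    _ ≤ (2^B.card * Real.exp (-(β * D))) * wsum E B (fun _ => true) (fun _ => 1) := by
        apply mul_le_mul_of_nonneg_left hden (by positivity)

end Flip

/-! ### The energy deficit estimate -/

lemma spin_mul_le_one (b c : Bool) : spin b * spin c ≤ 1 := by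
  cases b <;> cases c <;> norm_num [spin]

lemma spin_mul_neg {b c : Bool} (h : b ≠ c) : spin b * spin c = -1 := by
  cases b <;> cases c <;> simp_all [spin]

lemma energy_diff {W : Type*} (G : SimpleGraph W) (B : Finset W) (σ : W → Bool) :
    energyF G B (fun _ => true) - energyF G B σ
      = (1/2) * ∑ x ∈ B, ∑ y ∈ B.filter (G.Adj x), (1 - spin (σ x) * spin (σ y)) := by
  rw [energyF, energyF, ← mul_sub, ← Finset.sum_sub_distrib]
  congr 1
  apply Finset.sum_congr rfl
  intro x _
  rw [← Finset.sum_sub_distrib]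
  apply Finset.sum_congr rfl
  intro y _
  norm_num [spin]

lemma filter_sigma_card (g : ℕ) (s : Finset ℕ) (P : GV g → Prop) :
    ((s.sigma (fun k => (univ : Finset (Fin ((Kv g)^k))))).filter P).card
      = ∑ k ∈ s, ((univ : Finset (Fin ((Kv g)^k))).filter (fun x => P ⟨k, x⟩)).card := by
  rw [← Finset.card_sigma]
  congr 1
  ext ⟨k, x⟩
  simp only [Finset.mem_filter, Finset.mem_sigma, Finset.mem_univ, and_true, true_and]
  try tauto

lemma filter_sigma_card_bool (g : ℕ) (s : Finset ℕ) (σ : GV g → Bool) :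
    ((s.sigma (fun k => (univ : Finset (Fin ((Kv g)^k))))).filter (fun v => σ v = true)).card
      = ∑ k ∈ s, ((univ : Finset (Fin ((Kv g)^k))).filter (fun x => σ ⟨k, x⟩ = true)).card := by
  rw [← Finset.card_sigma]
  congr 1
  ext ⟨k, x⟩
  simp only [Finset.mem_filter, Finset.mem_sigma, Finset.mem_univ, and_true, true_and]
  try tauto

lemma mkr_inj (g r : ℕ) :
    Function.Injective (fun a : Fin ((Kv g)^r) => (⟨r, a⟩ : GV g)) := by
  intro a b h
  exact Fin.ext (congrArg (fun w : GV g => (w.2.val : ℕ)) h)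

lemma adj_intra {g r : ℕ} {a b : Fin ((Kv g)^r)} (i : Fin 4) (hab : a ≠ b)
    (h : prm ((Kv g)^r) i a = b) : (GG g).Adj ⟨r,a⟩ ⟨r,b⟩ := by
  refine ⟨?_, Or.inr (Or.inr ⟨rfl, i, Or.inl ?_⟩)⟩
  · intro hh
    exact hab (Fin.ext (congrArg (fun w : GV g => (w.2.val : ℕ)) hh))
  · rw [h]

lemma deficit (g : ℕ) (hg : 1 ≤ g) (r : ℕ) (hr : 3 ≤ r) (σ : GV g → Bool)
    (hbal : (mag (ballF g r) σ)^2 ≤ 1) :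
    energyF (GG g) (ballF g r) σ + ((ballF g r).card : ℝ)/200
      ≤ energyF (GG g) (ballF g r) (fun _ => true) := by
  classical
  set B : Finset (GV g) := ballF g r with hB
  set L : ℕ := (Kv g)^r with hLdef
  set n : ℕ := B.card with hn
  -- basic size facts
  have hK12 : 12 ≤ Kv g := Kv_ge hg
  have hL1500 : 1500 ≤ L := by
    have h1 : 12^3 ≤ 12^r := Nat.pow_le_pow_right (by norm_num) hr
    have h2 : 12^r ≤ (Kv g)^r := Nat.pow_le_pow_left hK12 r
    have : (1728 : ℕ) ≤ L := by
      calc (1728 : ℕ) = 12^3 := by norm_num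
        _ ≤ 12^r := h1
        _ ≤ L := h2
    omega
  set prev : ℕ := ∑ k ∈ Finset.range r, (Kv g)^k with hprev
  have hprevL : 11 * prev ≤ L := geom_le hg r
  have hnprev : n = prev + L := by
    rw [hn, hB, card_ballF, Finset.sum_range_succ]
  -- counting spins
  set t : ℕ := (B.filter fun v => σ v = true).card with ht
  have hcount := spin_sum_count B σ
  have hbal1 : (n : ℝ) ≤ 2*t + 1 ∧ 2*(t:ℝ) ≤ n + 1 := by
    constructor <;> nlinarith [hcount, hbal]
  have hbn1 : n ≤ 2*t + 1 := by exact_mod_cast hbal1.1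
  have hbn2 : 2*t ≤ n + 1 := by exact_mod_cast hbal1.2
  -- layer-r spin count
  set S0 : Finset (Fin ((Kv g)^r)) := univ.filter (fun a => σ ⟨r, a⟩ = true) with hS0
  set s0 : ℕ := S0.card with hs0
  have htsum0 : t = ∑ k ∈ Finset.range (r+1),
      ((univ : Finset (Fin ((Kv g)^k))).filter (fun x => σ ⟨k, x⟩ = true)).card := by
    rw [ht, hB]
    unfold ballF
    exact filter_sigma_card_bool g (Finset.range (r+1)) σ
  have htsum : t = (∑ k ∈ Finset.range r,
      ((univ : Finset (Fin ((Kv g)^k))).filter (fun x => σ ⟨k, x⟩ = true)).card) + s0 := by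
    rw [htsum0, Finset.sum_range_succ, hs0, hS0]
  have hprevc : (∑ k ∈ Finset.range r,
      ((univ : Finset (Fin ((Kv g)^k))).filter (fun x => σ ⟨k, x⟩ = true)).card) ≤ prev := by
    rw [hprev]
    apply Finset.sum_le_sum
    intro k _
    calc ((univ : Finset (Fin ((Kv g)^k))).filter (fun x => σ ⟨k, x⟩ = true)).card
        ≤ (univ : Finset (Fin ((Kv g)^k))).card := card_filter_le _ _
      _ = (Kv g)^k := by rw [card_univ, Fintype.card_fin]
  have hts0 : s0 ≤ t := by omega
  have htub : t ≤ prev + s0 := by omega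
  have hs0L : s0 ≤ L := by
    rw [hs0, hS0]
    calc S0.card ≤ (univ : Finset (Fin ((Kv g)^r))).card := card_filter_le _ _
      _ = L := by rw [card_univ, Fintype.card_fin]
  -- both sides of the layer are big
  have hbig1 : 2*L ≤ 5*s0 := by omega
  have hbig2 : 2*L ≤ 5*(L - s0) := by omega
  -- choose the smaller side
  set T0 : Finset (Fin ((Kv g)^r)) := if 2*s0 ≤ L then S0 else S0ᶜ with hT0
  have hcompl : (S0ᶜ : Finset (Fin ((Kv g)^r))).card = L - s0 := by
    rw [card_compl, Fintype.card_fin]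
  have hT1 : 2*L ≤ 5*T0.card := by
    rw [hT0]
    by_cases hcase : 2*s0 ≤ L
    · rw [if_pos hcase]; omega
    · rw [if_neg hcase, hcompl]; omega
  have hT2 : 2*T0.card ≤ L := by
    rw [hT0]
    by_cases hcase : 2*s0 ≤ L
    · rw [if_pos hcase]; omega
    · rw [if_neg hcase, hcompl]; omega
  -- apply the expander property
  obtain ⟨i, hcut⟩ := prm_spec (L := L) hL1500 T0 hT1 hT2
  set X : Finset (Fin ((Kv g)^r)) := T0.filter (fun a => prm L i a ∉ T0) with hX
  have hXT0 : ∀ a ∈ X, a ∈ T0 ∧ prm L i a ∉ T0 := by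
    intro a ha
    exact ⟨(Finset.mem_filter.1 ha).1, (Finset.mem_filter.1 ha).2⟩
  have hdis : ∀ a ∈ X, σ ⟨r, a⟩ ≠ σ ⟨r, prm L i a⟩ := by
    intro a ha
    obtain ⟨h1, h2⟩ := hXT0 a ha
    rw [hT0] at h1 h2
    by_cases hcase : 2*s0 ≤ L
    · rw [if_pos hcase] at h1 h2
      have e1 : σ ⟨r, a⟩ = true := (Finset.mem_filter.1 h1).2
      have e2 : ¬ (σ ⟨r, prm L i a⟩ = true) := fun hh =>
        h2 (Finset.mem_filter.2 ⟨Finset.mem_univ _, hh⟩)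
      rw [e1]
      exact fun hh => e2 hh.symm
    · rw [if_neg hcase] at h1 h2
      rw [Finset.mem_compl] at h1 h2
      have e1 : ¬ (σ ⟨r, a⟩ = true) := fun hh =>
        h1 (Finset.mem_filter.2 ⟨Finset.mem_univ _, hh⟩)
      rw [not_not] at h2
      have e2 : σ ⟨r, prm L i a⟩ = true := (Finset.mem_filter.1 h2).2
      rw [e2]
      intro hh
      exact e1 hh
  have hne : ∀ a ∈ X, a ≠ prm L i a := by
    intro a ha hh
    exact hdis a ha (by rw [← hh])
  -- the two disagreeing vertex sets
  set W1 : Finset (GV g) := X.image (fun a => (⟨r, a⟩ : GV g)) with hW1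
  set W2 : Finset (GV g) := (X.image (prm L i)).image (fun a => (⟨r, a⟩ : GV g)) with hW2
  have hW1card : W1.card = X.card := Finset.card_image_of_injective _ (mkr_inj g r)
  have hW2card : W2.card = X.card := by
    rw [hW2, Finset.card_image_of_injective _ (mkr_inj g r),
      Finset.card_image_of_injective _ (prm L i).injective]
  have hdisj : Disjoint W1 W2 := by
    rw [Finset.disjoint_left]
    intro x hx1 hx2
    obtain ⟨a, ha, rfl⟩ := Finset.mem_image.1 hx1
    obtain ⟨b, hb, hba⟩ := Finset.mem_image.1 hx2
    obtain ⟨c, hc, rfl⟩ := Finset.mem_image.1 hb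
    have : prm L i c = a := mkr_inj g r hba
    have hcT := (hXT0 c hc).2
    rw [this] at hcT
    exact hcT (hXT0 a ha).1
  have hWsub : W1 ∪ W2 ⊆ B := by
    intro x hx
    rw [hB]
    rcases Finset.mem_union.1 hx with hx | hx
    · obtain ⟨a, _, rfl⟩ := Finset.mem_image.1 hx
      rw [mem_ballF]
    · obtain ⟨a, ha, rfl⟩ := Finset.mem_image.1 hx
      rw [mem_ballF]
  -- energy estimate
  set F : GV g → ℝ := fun x => ∑ y ∈ B.filter ((GG g).Adj x), (1 - spin (σ x) * spin (σ y))
    with hF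
  have hdiff : energyF (GG g) B (fun _ => true) - energyF (GG g) B σ
      = (1/2) * ∑ x ∈ B, F x := energy_diff (GG g) B σ
  have hF0 : ∀ x, 0 ≤ F x := by
    intro x
    apply Finset.sum_nonneg
    intro y _
    have := spin_mul_le_one (σ x) (σ y)
    linarith
  have hFW : ∀ x ∈ W1 ∪ W2, 2 ≤ F x := by
    intro x hx
    have hterm : ∀ (u w : GV g), (GG g).Adj u w → w ∈ B → σ u ≠ σ w → 2 ≤ F u := by
      intro u w hadj hwB hne2
      have hmemf : w ∈ B.filter ((GG g).Adj u) := Finset.mem_filter.2 ⟨hwB, hadj⟩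
      have hval : (1 : ℝ) - spin (σ u) * spin (σ w) = 2 := by
        rw [spin_mul_neg hne2]; norm_num
      have hss := Finset.single_le_sum (f := fun y => (1 : ℝ) - spin (σ u) * spin (σ y))
        (fun y _ => by
          show (0:ℝ) ≤ 1 - spin (σ u) * spin (σ y)
          linarith [spin_mul_le_one (σ u) (σ y)]) hmemf
      show (2:ℝ) ≤ ∑ y ∈ B.filter ((GG g).Adj u), (1 - spin (σ u) * spin (σ y))
      linarith
    rcases Finset.mem_union.1 hx with hx | hx
    · obtain ⟨a, ha, rfl⟩ := Finset.mem_image.1 hx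
      refine hterm _ (⟨r, prm L i a⟩ : GV g) (adj_intra i (hne a ha) rfl) ?_ (hdis a ha)
      rw [hB, mem_ballF]
    · obtain ⟨b, hb, rfl⟩ := Finset.mem_image.1 hx
      obtain ⟨a, ha, rfl⟩ := Finset.mem_image.1 hb
      refine hterm _ (⟨r, a⟩ : GV g) ((adj_intra i (hne a ha) rfl).symm) ?_ (hdis a ha).symm
      rw [hB, mem_ballF]
  have hsum1 : ∑ x ∈ W1 ∪ W2, F x ≤ ∑ x ∈ B, F x :=
    Finset.sum_le_sum_of_subset_of_nonneg hWsub (fun x _ _ => hF0 x)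
  have hsum2 : (2 : ℝ) * (2 * X.card) ≤ ∑ x ∈ W1 ∪ W2, F x := by
    have hcard : (W1 ∪ W2).card = 2 * X.card := by
      rw [Finset.card_union_of_disjoint hdisj, hW1card, hW2card]
      ring
    have := Finset.card_nsmul_le_sum (W1 ∪ W2) F 2 hFW
    rw [hcard] at this
    calc (2 : ℝ) * (2 * X.card) = ((2 * X.card : ℕ) : ℝ) * 2 := by push_cast; ring
      _ ≤ ∑ x ∈ W1 ∪ W2, F x := by
          have h2 := this
          rw [nsmul_eq_mul] at h2
          exact_mod_cast h2
  -- put everything together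
  have hXn : (n : ℝ) ≤ 400 * X.card := by
    have h11 : 11 * n ≤ 12 * L := by omega
    have : n ≤ 400 * X.card := by omega
    exact_mod_cast this
  have hE2 : (2 : ℝ) * (2 * X.card) ≤ ∑ x ∈ B, F x := le_trans hsum2 hsum1
  have hfinal : (n : ℝ)/200 ≤ (1/2) * ∑ x ∈ B, F x := by
    have h2X : (n:ℝ)/200 ≤ 2 * (X.card : ℝ) := by linarith
    linarith
  linarith

lemma numeric (n : ℕ) (β : ℝ) (hβ : 600 ≤ β) :
    (n:ℝ) * ((1/4) * ((2:ℝ)^n * Real.exp (-(β * ((n:ℝ)/200)))))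
      ≤ Real.exp (-(1/1000) * (n:ℝ)) * (1/4) := by
  have hn0 : (0:ℝ) ≤ (n:ℝ) := Nat.cast_nonneg n
  have h1 : Real.exp (-(β * ((n:ℝ)/200))) ≤ Real.exp (-(3*(n:ℝ))) := by
    apply Real.exp_le_exp.2
    nlinarith
  have h2 : (2:ℝ)^n ≤ Real.exp (n:ℝ) := by
    have he : Real.exp ((n:ℝ)) = (Real.exp 1)^n := by
      rw [← Real.exp_nat_mul]; norm_num
    rw [he]
    apply pow_le_pow_left₀ (by norm_num)
    have := Real.exp_one_gt_d9
    linarith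
  have h3 : (n:ℝ) ≤ Real.exp (n:ℝ) := by
    have := Real.add_one_le_exp ((n:ℝ)); linarith
  have hprod : (n:ℝ) * ((2:ℝ)^n * Real.exp (-(β * ((n:ℝ)/200))))
      ≤ Real.exp (n:ℝ) * (Real.exp (n:ℝ) * Real.exp (-(3*(n:ℝ)))) := by
    apply mul_le_mul h3 _ (by positivity) (le_of_lt (Real.exp_pos _))
    apply mul_le_mul h2 h1 (le_of_lt (Real.exp_pos _)) (by positivity)
  have hcollapse : Real.exp (n:ℝ) * (Real.exp (n:ℝ) * Real.exp (-(3*(n:ℝ))))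
      = Real.exp (-(n:ℝ)) := by
    rw [← Real.exp_add, ← Real.exp_add]
    congr 1
    ring
  have hlast : Real.exp (-(n:ℝ)) ≤ Real.exp (-(1/1000) * (n:ℝ)) := by
    apply Real.exp_le_exp.2
    linarith
  calc (n:ℝ) * ((1/4) * ((2:ℝ)^n * Real.exp (-(β * ((n:ℝ)/200)))))
      = (1/4) * ((n:ℝ) * ((2:ℝ)^n * Real.exp (-(β * ((n:ℝ)/200))))) := by ring
    _ ≤ (1/4) * (Real.exp (n:ℝ) * (Real.exp (n:ℝ) * Real.exp (-(3*(n:ℝ))))) :=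
        mul_le_mul_of_nonneg_left hprod (by norm_num)
    _ = (1/4) * Real.exp (-(n:ℝ)) := by rw [hcollapse]
    _ ≤ (1/4) * Real.exp (-(1/1000) * (n:ℝ)) := mul_le_mul_of_nonneg_left hlast (by norm_num)
    _ = Real.exp (-(1/1000) * (n:ℝ)) * (1/4) := by ring

end StatementOneAux
-- SCRATCHEND

set_option maxHeartbeats 2000000 in
/-- for every `g ≥ 1` there is an infinite connected bounded-degree
`(g,o)`-growing graph on which, for all low enough temperatures, the free-boundary
Glauber dynamics on the `n`-vertex ball `B_r` has spectral gap at most `e^{-θ n}`. -/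
theorem statement1 (g : ℕ) (hg : 1 ≤ g) :
    ∃ (V : Type) (_ : DecidableEq V) (_ : Infinite V) (G : SimpleGraph V)
      (hlf : G.LocallyFinite) (o : V) (Δ : ℕ),
      G.Connected ∧ (∀ v : V, (nbr G hlf v).card ≤ Δ) ∧ IsGrowing G hlf g o ∧
      ∃ β₀ θ : ℝ, 0 < β₀ ∧ 0 < θ ∧
        ∀ β : ℝ, β₀ ≤ β → ∃ r₀ : ℕ, ∀ r : ℕ, r₀ ≤ r →
          ∀ Br : Finset V, (∀ v : V, v ∈ Br ↔ G.dist o v ≤ r) →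
            ∃ f : (V → Bool) → ℝ,
              gVar (fun σ => β * energyF G Br σ) Br (fun _ => true) f ≠ 0 ∧
              dirich (fun σ => β * energyF G Br σ) Br (fun _ => true) f ≤
                Real.exp (-θ * (Br.card : ℝ)) *
                  gVar (fun σ => β * energyF G Br σ) Br (fun _ => true) f := by
  classical
  open StatementOneAux in
  refine ⟨GV g, inferInstance, infinite_GV g, GG g, hlfG g, oV g, Kv g + 9,
    GG_connected g, deg_le g, growing g, 600, 1/1000, by norm_num, by norm_num, ?_⟩
  intro β hβ
  refine ⟨3, ?_⟩
  intro r hr Br hBr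
  have hBeq : Br = ballF g r := ballF_eq Br hBr
  subst hBeq
  have hodd := ball_odd g r
  have hq : gVar (fun σ => β * energyF (GG g) (ballF g r) σ) (ballF g r)
      (fun _ => true) (fMaj (ballF g r)) = 1/4 :=
    gVar_fMaj_quarter (GG g) β (ballF g r) (fun _ => true) hodd
  refine ⟨fMaj (ballF g r), ?_, ?_⟩
  · rw [hq]
    norm_num
  · rw [hq]
    set n : ℕ := (ballF g r).card with hn
    have hdirich := dirich_le (GG g) β (ballF g r) (fun _ => true) hodd
    have hdef : ∀ σ : GV g → Bool, (mag (ballF g r) σ)^2 ≤ 1 →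
        energyF (GG g) (ballF g r) σ + ((n:ℝ)/200)
          ≤ energyF (GG g) (ballF g r) (fun _ => true) := by
      intro σ hσ
      exact deficit g hg r hr σ hσ
    have hchi := gExp_chi_le (GG g) β (by linarith) (ballF g r) ((n:ℝ)/200) hdef
    calc dirich (fun σ => β * energyF (GG g) (ballF g r) σ) (ballF g r) (fun _ => true)
          (fMaj (ballF g r))
        ≤ (n : ℝ) * ((1/4) * gExp (fun σ => β * energyF (GG g) (ballF g r) σ)
            (ballF g r) (fun _ => true) (chiB (ballF g r))) := hdirich
      _ ≤ (n : ℝ) * ((1/4) * ((2:ℝ)^n * Real.exp (-(β * ((n:ℝ)/200))))) := by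
          apply mul_le_mul_of_nonneg_left _ (Nat.cast_nonneg n)
          exact mul_le_mul_of_nonneg_left hchi (by norm_num)
      _ ≤ Real.exp (-(1/1000) * (n:ℝ)) * (1/4) := numeric n β hβ
end
end

section
/- Let G be an infinite (g,o)-growing graph with g ≥ 1 and maximal degree Δ < ∞, and fix i ∈ {0,…,m}, S ⊆ L_i, U = F_{i+1} ∪ S. Then for every β > 0 and every subset C ⊆ U, μ_U^−({σ : σ_z = −1 for all z ∈ C and σ_z = +1 for all z ∈ ∂_V C ∩ U}) ≤ e^{−2gβ|C|}, where ∂_V C is the external vertex boundary of C. -/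
/- Common framework: Ising model with boundary conditions on (finite pieces of)
   locally finite graphs, heat-bath Glauber dynamics quantities. -/

open Finset
open scoped Classical

noncomputable section

open IsingGlauber

namespace IsingGlauber

variable {V : Type*} [DecidableEq V]

/-- Flip the configuration on `C`. -/
def flipC (C : Finset V) (σ : V → Bool) : V → Bool := fun v => if v ∈ C then !(σ v) else σ v

lemma spin_not (b : Bool) : spin (!b) = -spin b := by cases b <;> simp [spin]
lemma spin_false : spin false = -1 := rfl
lemma spin_true : spin true = 1 := rfl
lemma neg_one_le_spin (b : Bool) : -1 ≤ spin b := by cases b <;> norm_num [spin]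

set_option linter.unusedSectionVars false in
lemma mem_nbr {G : SimpleGraph V} {hlf : G.LocallyFinite} {x y : V} :
    y ∈ nbr G hlf x ↔ G.Adj x y := by
  simp [nbr, SimpleGraph.mem_neighborFinset]

lemma nbr_subset_cl {G : SimpleGraph V} {hlf : G.LocallyFinite} {U : Finset V} {x : V}
    (hx : x ∈ U) : nbr G hlf x ⊆ cl G hlf U := by
  intro y hy
  by_cases hyU : y ∈ U
  · exact Finset.mem_union_left _ hyU
  · refine Finset.mem_union_right _ ?_
    exact Finset.mem_sdiff.mpr ⟨Finset.mem_biUnion.mpr ⟨x, hx, hy⟩, hyU⟩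

/-- Energy change under flipping all spins on `C`, when `σ` is `false` on all of `C`. -/
lemma energy_flip (G : SimpleGraph V) (hlf : G.LocallyFinite) (U C : Finset V)
    (hC : C ⊆ U) (σ : V → Bool) (hmin : ∀ x ∈ C, σ x = false) :
    energyB G hlf U (flipC C σ) =
      energyB G hlf U σ + ∑ x ∈ C, ∑ y ∈ nbr G hlf x \ C, 2 * spin (σ y) := by
  classical
  set K := cl G hlf U with hK
  have hCK : C ⊆ K := hC.trans (Finset.subset_union_left)
  have hpt : ∀ x y : V,
      (if G.Adj x y then spin (flipC C σ x) * spin (flipC C σ y) else 0) =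
        (if G.Adj x y then spin (σ x) * spin (σ y) else 0) +
        (if x ∈ C ∧ y ∉ C ∧ G.Adj x y then 2 * spin (σ y) else 0) +
        (if y ∈ C ∧ x ∉ C ∧ G.Adj x y then 2 * spin (σ x) else 0) := by
    intro x y
    by_cases ha : G.Adj x y
    · by_cases hx : x ∈ C <;> by_cases hy : y ∈ C
      · simp [flipC, hx, hy, ha, spin_not, hmin x hx, hmin y hy, spin]
      · simp [flipC, hx, hy, ha, spin_not, hmin x hx, spin]; split <;> norm_num
      · simp [flipC, hx, hy, ha, spin_not, hmin y hy, spin]; split <;> norm_num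
      · simp [flipC, hx, hy, ha]
    · simp [ha]
  have hrw : ∀ τ : V → Bool, energyB G hlf U τ =
      (1/2) * ∑ x ∈ K, ∑ y ∈ K, (if G.Adj x y then spin (τ x) * spin (τ y) else 0) := by
    intro τ
    unfold energyB
    rw [← hK]
    simp [Finset.sum_filter]
  have hsum : ∑ x ∈ K, ∑ y ∈ K, (if G.Adj x y then spin (flipC C σ x) * spin (flipC C σ y) else 0)
      = (∑ x ∈ K, ∑ y ∈ K, (if G.Adj x y then spin (σ x) * spin (σ y) else 0))
        + (∑ x ∈ K, ∑ y ∈ K, (if x ∈ C ∧ y ∉ C ∧ G.Adj x y then 2 * spin (σ y) else 0))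
        + (∑ x ∈ K, ∑ y ∈ K, (if y ∈ C ∧ x ∉ C ∧ G.Adj x y then 2 * spin (σ x) else 0)) := by
    rw [← Finset.sum_add_distrib, ← Finset.sum_add_distrib]
    refine Finset.sum_congr rfl fun x _ => ?_
    rw [← Finset.sum_add_distrib, ← Finset.sum_add_distrib]
    exact Finset.sum_congr rfl fun y _ => hpt x y
  have hswap : (∑ x ∈ K, ∑ y ∈ K, (if y ∈ C ∧ x ∉ C ∧ G.Adj x y then 2 * spin (σ x) else 0))
      = ∑ x ∈ K, ∑ y ∈ K, (if x ∈ C ∧ y ∉ C ∧ G.Adj x y then 2 * spin (σ y) else 0) := by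
    rw [Finset.sum_comm]
    refine Finset.sum_congr rfl fun x _ => Finset.sum_congr rfl fun y _ => ?_
    refine if_congr ?_ rfl rfl
    constructor
    · rintro ⟨h1, h2, h3⟩; exact ⟨h1, h2, h3.symm⟩
    · rintro ⟨h1, h2, h3⟩; exact ⟨h1, h2, h3.symm⟩
  have houter : (∑ x ∈ K, ∑ y ∈ K, (if x ∈ C ∧ y ∉ C ∧ G.Adj x y then 2 * spin (σ y) else 0))
      = ∑ x ∈ C, ∑ y ∈ nbr G hlf x \ C, 2 * spin (σ y) := by
    rw [← Finset.sum_subset hCK (fun x _ hx =>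
      Finset.sum_eq_zero fun y _ => by simp [hx])]
    refine Finset.sum_congr rfl fun x hx => ?_
    have hfin : (nbr G hlf x \ C) = K.filter (fun y => x ∈ C ∧ y ∉ C ∧ G.Adj x y) := by
      ext y
      simp only [Finset.mem_sdiff, Finset.mem_filter, mem_nbr]
      constructor
      · rintro ⟨hadj, hyC⟩
        exact ⟨nbr_subset_cl (hC hx) (mem_nbr.mpr hadj), hx, hyC, hadj⟩
      · tauto
    rw [hfin, Finset.sum_filter]
  rw [hrw, hrw, hsum, hswap, houter]
  ring

/-- Growth bound: on the event, the boundary sum created by flipping `C` is at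
least `2 g |C|`. -/
lemma flip_sum_ge (G : SimpleGraph V) (hlf : G.LocallyFinite) (hconn : G.Connected)
    (g : ℕ) (o : V) (hgrow : IsGrowing G hlf g o) (C : Finset V)
    (σ : V → Bool)
    (hup : ∀ x ∈ C, ∀ y, G.Adj x y → y ∉ C → G.dist o y = G.dist o x + 1 → σ y = true) :
    (2 * g * C.card : ℝ) ≤ ∑ x ∈ C, ∑ y ∈ nbr G hlf x \ C, 2 * spin (σ y) := by
  classical
  set up : V → Finset V :=
    fun x => (nbr G hlf x).filter (fun z => G.dist o z = G.dist o x + 1) with hupdef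
  set dn : V → Finset V :=
    fun x => (nbr G hlf x).filter (fun z => G.dist o z ≤ G.dist o x) with hdndef
  have hd : ∀ x y : V, G.Adj x y → G.dist o y ≤ G.dist o x + 1 := by
    intro x y h
    have h1 := hconn.dist_triangle (u := o) (v := x) (w := y)
    rwa [SimpleGraph.dist_eq_one_iff_adj.mpr h] at h1
  have hdecomp : ∀ x : V, nbr G hlf x \ C = (up x \ C) ∪ (dn x \ C) := by
    intro x
    ext y
    simp only [Finset.mem_sdiff, Finset.mem_union, hupdef, hdndef, Finset.mem_filter]
    constructor
    · rintro ⟨hy, hyC⟩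
      have := hd x y (mem_nbr.mp hy)
      by_cases hle : G.dist o y ≤ G.dist o x
      · exact Or.inr ⟨⟨hy, hle⟩, hyC⟩
      · exact Or.inl ⟨⟨hy, by omega⟩, hyC⟩
    · rintro (⟨⟨hy, _⟩, hyC⟩ | ⟨⟨hy, _⟩, hyC⟩) <;> exact ⟨hy, hyC⟩
  have hdisj : ∀ x : V, Disjoint (up x \ C) (dn x \ C) := by
    intro x
    refine Finset.disjoint_left.mpr fun y hy1 hy2 => ?_
    simp only [Finset.mem_sdiff, hupdef, hdndef, Finset.mem_filter] at hy1 hy2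
    omega
  have hinner : ∀ x ∈ C, 2 * ((up x \ C).card : ℝ) - 2 * ((dn x \ C).card : ℝ) ≤
      ∑ y ∈ nbr G hlf x \ C, 2 * spin (σ y) := by
    intro x hx
    rw [hdecomp x, Finset.sum_union (hdisj x)]
    have hup1 : ∑ y ∈ up x \ C, 2 * spin (σ y) = 2 * ((up x \ C).card : ℝ) := by
      rw [Finset.sum_congr rfl (fun y hy => ?_), Finset.sum_const, nsmul_eq_mul, mul_comm]
      have hy' := hy
      simp only [Finset.mem_sdiff, hupdef, Finset.mem_filter] at hy'
      rw [hup x hx y (mem_nbr.mp hy'.1.1) hy'.2 hy'.1.2, spin_true, mul_one]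
    have hdn1 : -(2 * ((dn x \ C).card : ℝ)) ≤ ∑ y ∈ dn x \ C, 2 * spin (σ y) := by
      have h := Finset.sum_le_sum (s := dn x \ C)
        (f := fun _ : V => (-2 : ℝ)) (g := fun y => 2 * spin (σ y))
        (fun y _ => by
          have := neg_one_le_spin (σ y)
          show (-2 : ℝ) ≤ 2 * spin (σ y)
          linarith)
      rw [Finset.sum_const, nsmul_eq_mul] at h
      linarith
    rw [hup1]
    linarith
  have e1 : ∑ x ∈ C, (up x \ C).card + ∑ x ∈ C, (up x ∩ C).card = ∑ x ∈ C, (up x).card := by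
    rw [← Finset.sum_add_distrib]
    exact Finset.sum_congr rfl fun x _ => Finset.card_sdiff_add_card_inter _ _
  have e2 : ∑ x ∈ C, (dn x \ C).card + ∑ x ∈ C, (dn x ∩ C).card = ∑ x ∈ C, (dn x).card := by
    rw [← Finset.sum_add_distrib]
    exact Finset.sum_congr rfl fun x _ => Finset.card_sdiff_add_card_inter _ _
  have egrow : ∑ x ∈ C, (dn x).card + g * C.card ≤ ∑ x ∈ C, (up x).card := by
    have := Finset.sum_le_sum (s := C) (f := fun x => (dn x).card + g)
      (g := fun x => (up x).card) (fun x _ => hgrow x)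
    rwa [Finset.sum_add_distrib, Finset.sum_const, smul_eq_mul, mul_comm] at this
  have eswap : ∑ x ∈ C, (up x ∩ C).card ≤ ∑ x ∈ C, (dn x ∩ C).card := by
    have hcard : ∀ (A : Finset V), (A ∩ C).card = ∑ y ∈ C, if y ∈ A then 1 else 0 := by
      intro A
      rw [Finset.inter_comm, ← Finset.filter_mem_eq_inter, Finset.card_filter]
    calc ∑ x ∈ C, (up x ∩ C).card = ∑ x ∈ C, ∑ y ∈ C, if y ∈ up x then 1 else 0 :=
          Finset.sum_congr rfl fun x _ => hcard _
      _ = ∑ y ∈ C, ∑ x ∈ C, if y ∈ up x then 1 else 0 := Finset.sum_comm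
      _ ≤ ∑ y ∈ C, ∑ x ∈ C, if x ∈ dn y then 1 else 0 := by
          refine Finset.sum_le_sum fun y _ => Finset.sum_le_sum fun x _ => ?_
          by_cases h : y ∈ up x
          · have h' := h
            simp only [hupdef, Finset.mem_filter] at h'
            have : x ∈ dn y := by
              simp only [hdndef, Finset.mem_filter]
              exact ⟨mem_nbr.mpr (mem_nbr.mp h'.1).symm, by omega⟩
            simp [h, this]
          · simp [h]
      _ = ∑ y ∈ C, (dn y ∩ C).card := Finset.sum_congr rfl fun y _ => (hcard _).symm
  have ekey : g * C.card + ∑ x ∈ C, (dn x \ C).card ≤ ∑ x ∈ C, (up x \ C).card := by omega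
  calc (2 * g * C.card : ℝ)
      ≤ ∑ x ∈ C, (2 * ((up x \ C).card : ℝ) - 2 * ((dn x \ C).card : ℝ)) := by
        rw [Finset.sum_sub_distrib, ← Finset.mul_sum, ← Finset.mul_sum,
          ← Nat.cast_sum, ← Nat.cast_sum]
        have h2 : (g * C.card + ∑ x ∈ C, (dn x \ C).card : ℝ) ≤
            ((∑ x ∈ C, (up x \ C).card : ℕ) : ℝ) := by exact_mod_cast ekey
        push_cast at h2 ⊢
        linarith
    _ ≤ ∑ x ∈ C, ∑ y ∈ nbr G hlf x \ C, 2 * spin (σ y) := Finset.sum_le_sum hinner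

end IsingGlauber


/-- Claim 3.2 of the paper: under the all-minus boundary condition on
`B_i \ S` and plus on `∂_V B`, the probability that a whole subset `C ⊆ U` is minus
while its vertex boundary inside `U` is plus is at most `e^{-2gβ|C|}`. -/
theorem statement4 {V : Type*} [DecidableEq V] [Infinite V]
    (G : SimpleGraph V) (hlf : G.LocallyFinite) (hconn : G.Connected)
    (g Δ : ℕ) (hg : 1 ≤ g) (o : V)
    (hgrow : IsGrowing G hlf g o)
    (hΔ : ∀ v : V, (nbr G hlf v).card ≤ Δ)
    (β : ℝ) (hβ : 0 < β)
    (m i : ℕ) (him : i ≤ m) (Bm : Finset V) (hBm : ∀ v : V, v ∈ Bm ↔ G.dist o v ≤ m)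
    (S : Finset V) (hS : ∀ v ∈ S, G.dist o v = i)
    (U : Finset V) (hU : U = Bm.filter (fun v => i + 1 ≤ G.dist o v) ∪ S)
    (C : Finset V) (hC : C ⊆ U) :
    gProb (fun σ => β * energyB G hlf U σ) U
        (fun v => if G.dist o v ≤ i then false else true)
        (fun σ => (∀ z ∈ C, σ z = false) ∧ ∀ z ∈ vbd G hlf C ∩ U, σ z = true) ≤
      Real.exp (-(2 * (g : ℝ) * β) * (C.card : ℝ)) := by
  classical
  set η : V → Bool := fun v => if G.dist o v ≤ i then false else true with hη
  set E : (V → Bool) → ℝ := fun σ => β * energyB G hlf U σ with hE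
  set c : ℝ := Real.exp (-(2 * (g : ℝ) * β) * (C.card : ℝ)) with hc
  -- index set of configurations
  set I : Finset (∀ a ∈ U, Bool) := U.pi (fun _ => (Finset.univ : Finset Bool)) with hI
  have hmemI : ∀ p : (∀ a ∈ U, Bool), p ∈ I := fun p =>
    Finset.mem_pi.mpr fun a ha => Finset.mem_univ _
  -- distance lower bound on U
  have hUdist : ∀ x ∈ U, i ≤ G.dist o x := by
    intro x hx
    rw [hU] at hx
    rcases Finset.mem_union.mp hx with h | h
    · have := (Finset.mem_filter.mp h).2; omega
    · exact (hS x h).ge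
  -- the flip map on configurations
  set flipP : (∀ a ∈ U, Bool) → (∀ a ∈ U, Bool) :=
    fun p a ha => if a ∈ C then !(p a ha) else p a ha with hflipP
  have hinv : ∀ p, flipP (flipP p) = p := by
    intro p
    funext a ha
    by_cases h : a ∈ C <;> simp [hflipP, h]
  have hpatchflip : ∀ p, patch U η (flipP p) = flipC C (patch U η p) := by
    intro p
    funext v
    by_cases hvU : v ∈ U
    · simp [patch, flipC, hvU, hflipP]
    · have hvC : v ∉ C := fun h => hvU (hC h)
      simp [patch, flipC, hvU, hvC]
  -- the event
  set Pev : (V → Bool) → Prop :=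
    fun σ => (∀ z ∈ C, σ z = false) ∧ ∀ z ∈ vbd G hlf C ∩ U, σ z = true with hPev
  -- key exponential estimate for configurations in the event
  have hkey : ∀ p : (∀ a ∈ U, Bool), Pev (patch U η p) →
      Real.exp (E (patch U η p)) ≤ c * Real.exp (E (patch U η (flipP p))) := by
    intro p hp
    set σ := patch U η p with hσ
    obtain ⟨hmin, hplus⟩ := hp
    -- up-neighbours of C carry spin +1
    have hupspin : ∀ x ∈ C, ∀ y, G.Adj x y → y ∉ C →
        G.dist o y = G.dist o x + 1 → σ y = true := by
      intro x hx y hadj hyC hdy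
      by_cases hyU : y ∈ U
      · refine hplus y (Finset.mem_inter.mpr ⟨?_, hyU⟩)
        exact Finset.mem_sdiff.mpr
          ⟨Finset.mem_biUnion.mpr ⟨x, hx, mem_nbr.mpr hadj⟩, hyC⟩
      · have hσy : σ y = η y := by simp [hσ, patch, hyU]
        have hix : i ≤ G.dist o x := hUdist x (hC hx)
        rw [hσy, hη]
        simp only
        rw [if_neg (by omega)]
    have hsum := flip_sum_ge G hlf hconn g o hgrow C σ hupspin
    have hflipE := energy_flip G hlf U C hC σ hmin
    have hEle : E σ + (2 * (g : ℝ) * β) * (C.card : ℝ) ≤ E (flipC C σ) := by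
      rw [hE]
      simp only
      rw [hflipE, mul_add]
      have := mul_le_mul_of_nonneg_left hsum hβ.le
      nlinarith
    rw [hpatchflip, hc, ← Real.exp_add]
    apply Real.exp_le_exp.mpr
    have := hEle
    rw [← hpatchflip] at this
    linarith
  -- positivity of the partition function
  have hZpos : 0 < wsum E U η (fun _ => 1) := by
    rw [wsum]
    refine Finset.sum_pos (fun p _ => by positivity) ⟨fun a _ => true, hmemI _⟩
  -- the filtered set of configurations in the event
  set F : Finset (∀ a ∈ U, Bool) := I.filter (fun p => Pev (patch U η p)) with hF
  have hNum : wsum E U η (fun σ => if Pev σ then 1 else 0) =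
      ∑ p ∈ F, Real.exp (E (patch U η p)) := by
    rw [hF, Finset.sum_filter, wsum]
    refine Finset.sum_congr rfl fun p _ => ?_
    split_ifs <;> simp
  have hstep1 : ∑ p ∈ F, Real.exp (E (patch U η p)) ≤
      c * ∑ p ∈ F, Real.exp (E (patch U η (flipP p))) := by
    rw [Finset.mul_sum]
    refine Finset.sum_le_sum fun p hp => ?_
    exact hkey p (Finset.mem_filter.mp hp).2
  have hstep2 : ∑ p ∈ F, Real.exp (E (patch U η (flipP p))) ≤ wsum E U η (fun _ => 1) := by
    have hinj : Set.InjOn flipP F := by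
      intro p _ q _ h
      have := congrArg flipP h
      rwa [hinv, hinv] at this
    rw [← Finset.sum_image (f := fun q => Real.exp (E (patch U η q)))
      (fun p hp q hq h => hinj hp hq h)]
    rw [wsum]
    have hsub : F.image flipP ⊆ I := fun q _ => hmemI q
    refine le_trans (Finset.sum_le_sum_of_subset_of_nonneg hsub
      (fun q _ _ => by positivity)) ?_
    exact le_of_eq (Finset.sum_congr rfl fun p _ => by rw [mul_one])
  have hcpos : 0 < c := Real.exp_pos _
  have hfinal : wsum E U η (fun σ => if Pev σ then 1 else 0) ≤ c * wsum E U η (fun _ => 1) := by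
    rw [hNum]
    calc ∑ p ∈ F, Real.exp (E (patch U η p))
        ≤ c * ∑ p ∈ F, Real.exp (E (patch U η (flipP p))) := hstep1
      _ ≤ c * wsum E U η (fun _ => 1) := by
          exact mul_le_mul_of_nonneg_left hstep2 hcpos.le
  rw [gProb, gExp, div_le_iff₀ hZpos]
  refine le_trans (le_of_eq ?_) hfinal
  rw [wsum, wsum]
  refine Finset.sum_congr rfl fun p _ => ?_
  congr 1
  exact ite_congr rfl (fun _ => rfl) (fun _ => rfl)
end
end

section
/- Let G be an infinite (g,o)-growing graph with maximal degree Δ < ∞, and fix i ∈ {0,…,m}, S ⊆ L_i, U = F_{i+1} ∪ S. Then for every β > 0 and every subset C ⊆ U, μ_U^−({σ : σ_z = −1 for all z ∈ C and σ_z = +1 for all z ∈ ∂_V C ∩ U}) ≤ e^{−2β(|∂₊C| − |∂₋C|)}. -/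
/- Common framework: Ising model with boundary conditions on (finite pieces of)
   locally finite graphs, heat-bath Glauber dynamics quantities. -/

open Finset
open scoped Classical

noncomputable section

open IsingGlauber
namespace S5Aux

variable {V : Type*} [DecidableEq V]

lemma spin_not (b : Bool) : spin (!b) = - spin b := by cases b <;> simp [spin]

lemma sum_ind (s t : Finset V) (h : t ⊆ s) (f : V → ℝ) :
    ∑ x ∈ s, (if x ∈ t then f x else 0) = ∑ x ∈ t, f x := by
  rw [Finset.sum_ite_mem, Finset.inter_eq_right.mpr h]

lemma double_flip (G : SimpleGraph V) (K C : Finset V) (hC : C ⊆ K) (σ : V → Bool) :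
    ∑ x ∈ K, ∑ y ∈ K.filter (fun y => G.Adj x y),
        spin (if x ∈ C then !(σ x) else σ x) * spin (if y ∈ C then !(σ y) else σ y)
    = (∑ x ∈ K, ∑ y ∈ K.filter (fun y => G.Adj x y), spin (σ x) * spin (σ y))
      - 4 * ∑ x ∈ C, ∑ y ∈ (K \ C).filter (fun y => G.Adj x y), spin (σ x) * spin (σ y) := by
  have hconv : ∀ (g : V → V → ℝ) (s : Finset V),
      (∑ x ∈ s, ∑ y ∈ K.filter (fun y => G.Adj x y), g x y)
      = ∑ x ∈ s, ∑ y ∈ K, (if G.Adj x y then (1:ℝ) else 0) * g x y := by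
    intro g s
    refine Finset.sum_congr rfl fun x _ => ?_
    rw [Finset.sum_filter]
    refine Finset.sum_congr rfl fun y _ => ?_
    by_cases h : G.Adj x y <;> simp [h]
  set a : V → V → ℝ := fun x y => if G.Adj x y then (1:ℝ) else 0 with ha
  set c : V → ℝ := fun v => if v ∈ C then (1:ℝ) else 0 with hc
  set F : V → V → ℝ := fun x y => spin (σ x) * spin (σ y) with hF
  have hpoint : ∀ x y, a x y * (spin (if x ∈ C then !(σ x) else σ x) *
      spin (if y ∈ C then !(σ y) else σ y))
      = a x y * F x y - 2 * (c x * (a x y * F x y)) - 2 * (c y * (a x y * F x y))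
        + 4 * (c x * (c y * (a x y * F x y))) := by
    intro x y
    by_cases hx : x ∈ C <;> by_cases hy : y ∈ C <;>
      simp [hc, hF, hx, hy, spin_not] <;> ring
  have hS2 : (∑ x ∈ K, ∑ y ∈ K, c y * (a x y * F x y))
      = ∑ x ∈ K, ∑ y ∈ K, c x * (a x y * F x y) := by
    rw [Finset.sum_comm]
    refine Finset.sum_congr rfl fun x _ => Finset.sum_congr rfl fun y _ => ?_
    have h1 : a y x = a x y := by simp [ha, SimpleGraph.adj_comm]
    have h2 : F y x = F x y := by simp [hF]; ring
    rw [h1, h2]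
  have hcx : ∀ (g : V → ℝ), (∑ x ∈ K, c x * g x) = ∑ x ∈ C, g x := by
    intro g
    rw [← sum_ind K C hC g]
    refine Finset.sum_congr rfl fun x _ => ?_
    by_cases hx : x ∈ C <;> simp [hc, hx]
  have hcy : ∀ (s : Finset V) (g : V → V → ℝ),
      (∑ x ∈ s, ∑ y ∈ K, c y * g x y) = ∑ x ∈ s, ∑ y ∈ C, g x y := by
    intro s g
    refine Finset.sum_congr rfl fun x _ => ?_
    rw [← sum_ind K C hC (g x)]
    refine Finset.sum_congr rfl fun y _ => ?_
    by_cases hy : y ∈ C <;> simp [hc, hy]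
  have hcorr : (∑ x ∈ C, ∑ y ∈ (K \ C).filter (fun y => G.Adj x y), F x y)
      = (∑ x ∈ C, ∑ y ∈ K, a x y * F x y) - ∑ x ∈ C, ∑ y ∈ C, a x y * F x y := by
    rw [← Finset.sum_sub_distrib]
    refine Finset.sum_congr rfl fun x _ => ?_
    have h1 : ∑ y ∈ (K \ C).filter (fun y => G.Adj x y), F x y
        = ∑ y ∈ K \ C, a x y * F x y := by
      rw [Finset.sum_filter]
      refine Finset.sum_congr rfl fun y _ => ?_
      by_cases h : G.Adj x y <;> simp [ha, h]
    rw [h1, Finset.sum_sdiff_eq_sub hC]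
  have hU1 : (∑ x ∈ K, ∑ y ∈ K, c x * (a x y * F x y))
      = ∑ x ∈ C, ∑ y ∈ K, a x y * F x y := by
    simp_rw [← Finset.mul_sum]
    exact hcx _
  have hU3 : (∑ x ∈ K, ∑ y ∈ K, c x * (c y * (a x y * F x y)))
      = ∑ x ∈ C, ∑ y ∈ C, a x y * F x y := by
    simp_rw [← Finset.mul_sum]
    rw [hcx (fun x => ∑ y ∈ K, c y * (a x y * F x y))]
    exact hcy C (fun x y => a x y * F x y)
  have hmain : (∑ x ∈ K, ∑ y ∈ K.filter (fun y => G.Adj x y),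
        spin (if x ∈ C then !(σ x) else σ x) * spin (if y ∈ C then !(σ y) else σ y))
      = (∑ x ∈ K, ∑ y ∈ K, a x y * F x y)
        - 2 * (∑ x ∈ K, ∑ y ∈ K, c x * (a x y * F x y))
        - 2 * (∑ x ∈ K, ∑ y ∈ K, c y * (a x y * F x y))
        + 4 * (∑ x ∈ K, ∑ y ∈ K, c x * (c y * (a x y * F x y))) := by
    rw [hconv]
    simp_rw [show ∀ x y, (if G.Adj x y then (1:ℝ) else 0) = a x y from fun _ _ => rfl, hpoint]
    simp only [Finset.sum_add_distrib, Finset.sum_sub_distrib, ← Finset.mul_sum]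
  rw [hmain, hS2, hU1, hU3, hconv _ K, hcorr]
  ring

lemma energyB_flip (G : SimpleGraph V) (hlf : G.LocallyFinite) (U C : Finset V)
    (hC : C ⊆ cl G hlf U) (σ : V → Bool) :
    energyB G hlf U (fun v => if v ∈ C then !(σ v) else σ v)
      = energyB G hlf U σ
        - 2 * ∑ x ∈ C, ∑ y ∈ ((cl G hlf U) \ C).filter (fun y => G.Adj x y),
            spin (σ x) * spin (σ y) := by
  simp only [energyB]
  rw [double_flip G (cl G hlf U) C hC σ]
  ring

end S5Aux

/-- Peierls estimate: with minus boundary on `B_i \ S` and plus on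
`∂_V B`, the probability that `C ⊆ U` is all minus with plus spins on `∂_V C ∩ U`
is at most `e^{-2β(|∂₊C| - |∂₋C|)}`, where `∂₊C` are the boundary edges of `C` whose
outside endpoint lies in `U ∪ ∂_V B` and `∂₋C` those whose outside endpoint lies in
`B_i \ S`. -/
theorem statement5 {V : Type*} [DecidableEq V] [Infinite V]
    (G : SimpleGraph V) (hlf : G.LocallyFinite) (hconn : G.Connected)
    (g Δ : ℕ) (hg : 1 ≤ g) (o : V)
    (hgrow : IsGrowing G hlf g o)
    (hΔ : ∀ v : V, (nbr G hlf v).card ≤ Δ)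
    (β : ℝ) (hβ : 0 < β)
    (m i : ℕ) (him : i ≤ m) (Bm : Finset V) (hBm : ∀ v : V, v ∈ Bm ↔ G.dist o v ≤ m)
    (S : Finset V) (hS : ∀ v ∈ S, G.dist o v = i)
    (U : Finset V) (hU : U = Bm.filter (fun v => i + 1 ≤ G.dist o v) ∪ S)
    (C : Finset V) (hC : C ⊆ U) :
    gProb (fun σ => β * energyB G hlf U σ) U
        (fun v => if G.dist o v ≤ i then false else true)
        (fun σ => (∀ z ∈ C, σ z = false) ∧ ∀ z ∈ vbd G hlf C ∩ U, σ z = true) ≤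
      Real.exp (-2 * β *
        ((((obd G hlf C).filter (fun p => p.2 ∈ U ∨ G.dist o p.2 = m + 1)).card : ℝ) -
          (((obd G hlf C).filter (fun p => G.dist o p.2 ≤ i ∧ p.2 ∉ S)).card : ℝ))) := by
  classical
  set K := cl G hlf U with hK
  set η : V → Bool := fun v => if G.dist o v ≤ i then false else true with hη
  set P : (V → Bool) → Prop :=
    fun σ => (∀ z ∈ C, σ z = false) ∧ ∀ z ∈ vbd G hlf C ∩ U, σ z = true with hP
  set A : Finset (V × V) :=
    (obd G hlf C).filter (fun p => p.2 ∈ U ∨ G.dist o p.2 = m + 1) with hA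
  set Bf : Finset (V × V) :=
    (obd G hlf C).filter (fun p => G.dist o p.2 ≤ i ∧ p.2 ∉ S) with hBf
  set k : ℝ := (A.card : ℝ) - (Bf.card : ℝ) with hk
  set E : (V → Bool) → ℝ := fun σ => β * energyB G hlf U σ with hE
  -- basic set facts
  have hSU : S ⊆ U := by rw [hU]; exact Finset.subset_union_right
  have hUK : U ⊆ K := by rw [hK, cl]; exact Finset.subset_union_left
  have hCK : C ⊆ K := hC.trans hUK
  have hmem_nbr : ∀ x y : V, y ∈ nbr G hlf x ↔ G.Adj x y := by
    intro x y; exact @SimpleGraph.mem_neighborFinset V G x (hlf x) y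
  have hUm : ∀ v ∈ U, G.dist o v ≤ m := by
    intro v hv
    rw [hU] at hv
    rcases Finset.mem_union.mp hv with h | h
    · exact (hBm v).mp (Finset.mem_filter.mp h).1
    · rw [hS v h]; exact him
  have hUlow : ∀ v ∈ U, v ∉ S → i + 1 ≤ G.dist o v := by
    intro v hv hvS
    rw [hU] at hv
    rcases Finset.mem_union.mp hv with h | h
    · exact (Finset.mem_filter.mp h).2
    · exact absurd h hvS
  have hdista : ∀ x y : V, G.Adj x y → G.dist o y ≤ G.dist o x + 1 := by
    intro x y h
    calc G.dist o y ≤ G.dist o x + G.dist x y := hconn.dist_triangle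
      _ ≤ G.dist o x + 1 := by
          have := SimpleGraph.dist_le h.toWalk
          simp at this
          omega
  have hnb : ∀ x y : V, x ∈ U → G.Adj x y → y ∉ U →
      (G.dist o y ≤ i ∨ G.dist o y = m + 1) := by
    intro x y hx hxy hy
    by_cases hi : G.dist o y ≤ i
    · exact Or.inl hi
    · right
      have h1 : G.dist o y ≤ m + 1 := le_trans (hdista x y hxy) (by have := hUm x hx; omega)
      by_contra h2
      apply hy
      rw [hU]
      exact Finset.mem_union_left _ (Finset.mem_filter.mpr ⟨(hBm y).mpr (by omega), by omega⟩)
  have hObd : ∀ p : V × V, p ∈ obd G hlf C ↔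
      (p.1 ∈ C ∧ p.2 ∈ K ∧ p.2 ∉ C ∧ G.Adj p.1 p.2) := by
    intro p
    rw [obd, Finset.mem_filter, Finset.mem_product]
    constructor
    · rintro ⟨⟨h1, _⟩, h3, h4⟩
      refine ⟨h1, ?_, h4, h3⟩
      have hy : p.2 ∈ U.biUnion (nbr G hlf) :=
        Finset.mem_biUnion.mpr ⟨p.1, hC h1, (hmem_nbr _ _).mpr h3⟩
      rw [hK, cl]
      by_cases hU2 : p.2 ∈ U
      · exact Finset.mem_union_left _ hU2
      · exact Finset.mem_union_right _ (Finset.mem_sdiff.mpr ⟨hy, hU2⟩)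
    · rintro ⟨h1, _, h4, h3⟩
      exact ⟨⟨h1, Finset.mem_biUnion.mpr ⟨p.1, h1, (hmem_nbr _ _).mpr h3⟩⟩, h3, h4⟩
  -- the per-configuration energy identity
  have hEnergy : ∀ σ : V → Bool, (∀ v, v ∉ U → σ v = η v) → P σ →
      β * energyB G hlf U (fun v => if v ∈ C then !(σ v) else σ v)
        = β * energyB G hlf U σ + 2 * β * k := by
    intro σ hout hPσ
    rw [S5Aux.energyB_flip G hlf U C hCK σ]
    have hsum : (∑ x ∈ C, ∑ y ∈ (cl G hlf U \ C).filter (fun y => G.Adj x y),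
        spin (σ x) * spin (σ y)) = -k := by
      have h1 : (∑ x ∈ C, ∑ y ∈ (cl G hlf U \ C).filter (fun y => G.Adj x y),
          spin (σ x) * spin (σ y))
          = ∑ p ∈ obd G hlf C, spin (σ p.1) * spin (σ p.2) := by
        have h2 : (∑ x ∈ C, ∑ y ∈ (cl G hlf U \ C).filter (fun y => G.Adj x y),
            spin (σ x) * spin (σ y))
            = ∑ p ∈ (C ×ˢ (K \ C)).filter (fun p => G.Adj p.1 p.2),
                spin (σ p.1) * spin (σ p.2) := by
          rw [Finset.sum_filter, Finset.sum_product]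
          refine Finset.sum_congr rfl fun x _ => ?_
          rw [Finset.sum_filter]
        rw [h2]
        congr 1
        ext p
        rw [Finset.mem_filter, Finset.mem_product, Finset.mem_sdiff, hObd p]
        tauto
      rw [h1, ← Finset.sum_filter_add_sum_filter_not (obd G hlf C)
        (fun p => p.2 ∈ U ∨ G.dist o p.2 = m + 1)]
      have hspin1 : ∀ p ∈ (obd G hlf C).filter (fun p => p.2 ∈ U ∨ G.dist o p.2 = m + 1),
          spin (σ p.1) * spin (σ p.2) = -1 := by
        intro p hp
        rw [Finset.mem_filter] at hp
        obtain ⟨hp, hcase⟩ := hp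
        obtain ⟨h1, _, h4, h3⟩ := (hObd p).mp hp
        have hx : σ p.1 = false := hPσ.1 p.1 h1
        have hy : σ p.2 = true := by
          rcases hcase with hyU | hym
          · refine hPσ.2 p.2 (Finset.mem_inter.mpr ⟨?_, hyU⟩)
            rw [vbd, Finset.mem_sdiff]
            exact ⟨Finset.mem_biUnion.mpr ⟨p.1, h1, (hmem_nbr _ _).mpr h3⟩, h4⟩
          · have hyU : p.2 ∉ U := fun hyU => by have := hUm p.2 hyU; omega
            rw [hout p.2 hyU, hη]
            simp only [if_neg (by omega : ¬ G.dist o p.2 ≤ i)]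
        rw [hx, hy]
        simp [spin]
      have hspin2 : ∀ p ∈ (obd G hlf C).filter
          (fun p => ¬(p.2 ∈ U ∨ G.dist o p.2 = m + 1)),
          spin (σ p.1) * spin (σ p.2) = 1 := by
        intro p hp
        rw [Finset.mem_filter] at hp
        obtain ⟨hp, hcase⟩ := hp
        obtain ⟨h1, _, h4, h3⟩ := (hObd p).mp hp
        push_neg at hcase
        have hx : σ p.1 = false := hPσ.1 p.1 h1
        have hdy : G.dist o p.2 ≤ i := by
          rcases hnb p.1 p.2 (hC h1) h3 hcase.1 with h | h
          · exact h
          · exact absurd h hcase.2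
        have hy : σ p.2 = false := by
          rw [hout p.2 hcase.1, hη]
          simp only [if_pos hdy]
        rw [hx, hy]
        simp [spin]
      rw [Finset.sum_congr rfl hspin1, Finset.sum_congr rfl hspin2]
      have hBfeq : (obd G hlf C).filter (fun p => ¬(p.2 ∈ U ∨ G.dist o p.2 = m + 1)) = Bf := by
        rw [hBf]
        refine Finset.filter_congr fun p hp => ?_
        obtain ⟨h1, _, h4, h3⟩ := (hObd p).mp hp
        constructor
        · intro hcase
          push_neg at hcase
          have hdy : G.dist o p.2 ≤ i := by
            rcases hnb p.1 p.2 (hC h1) h3 hcase.1 with h | h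
            · exact h
            · exact absurd h hcase.2
          exact ⟨hdy, fun hs => hcase.1 (hSU hs)⟩
        · rintro ⟨hdy, hs⟩
          push_neg
          refine ⟨fun hyU => ?_, by omega⟩
          have := hUlow p.2 hyU hs
          omega
      rw [hBfeq, ← hA]
      simp only [Finset.sum_const, nsmul_eq_mul, mul_one, mul_neg_one, hk]
      ring
    rw [hsum]
    ring
  -- the bijection on boundary data
  set Φ : (∀ a ∈ U, Bool) → (∀ a ∈ U, Bool) :=
    fun p a h => if a ∈ C then !(p a h) else p a h with hΦ
  have hΦΦ : ∀ p, Φ (Φ p) = p := by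
    intro p
    funext a h
    by_cases ha : a ∈ C <;> simp [hΦ, ha]
  have hpatchΦ : ∀ p, patch U η (Φ p)
      = fun v => if v ∈ C then !(patch U η p v) else patch U η p v := by
    intro p
    funext v
    by_cases hv : v ∈ U
    · by_cases hvC : v ∈ C <;> simp [patch, hΦ, hv, hvC]
    · have hvC : v ∉ C := fun h => hv (hC h)
      simp [patch, hΦ, hv, hvC]
  have hout : ∀ (p : ∀ a ∈ U, Bool) (v : V), v ∉ U → patch U η p v = η v := by
    intro p v hv; simp [patch, hv]
  have hpimem : ∀ p, p ∈ U.pi (fun _ => (Finset.univ : Finset Bool)) := by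
    intro p; simp [Finset.mem_pi]
  have hpos1 : (0:ℝ) < wsum E U η (fun _ => 1) := by
    rw [wsum]
    apply Finset.sum_pos
    · intro p _
      rw [mul_one]
      exact Real.exp_pos _
    · exact ⟨fun a _ => true, hpimem _⟩
  have hkey : wsum E U η (fun σ => if P σ then 1 else 0)
      ≤ Real.exp (-2 * β * k) * wsum E U η (fun _ => 1) := by
    rw [wsum, wsum]
    calc (∑ p ∈ U.pi (fun _ => (Finset.univ : Finset Bool)),
          Real.exp (E (patch U η p)) * if P (patch U η p) then 1 else 0)
        ≤ ∑ p ∈ U.pi (fun _ => (Finset.univ : Finset Bool)),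
          Real.exp (-2 * β * k) * Real.exp (E (patch U η (Φ p))) := by
          refine Finset.sum_le_sum fun p _ => ?_
          by_cases hev : P (patch U η p)
          · rw [if_pos hev, mul_one]
            apply le_of_eq
            rw [← Real.exp_add]
            congr 1
            rw [hpatchΦ p]
            have hgoal := hEnergy (patch U η p) (hout p) hev
            rw [hE]
            simp only at hgoal ⊢
            linarith
          · rw [if_neg hev, mul_zero]
            positivity
      _ = Real.exp (-2 * β * k) * ∑ p ∈ U.pi (fun _ => (Finset.univ : Finset Bool)),
            Real.exp (E (patch U η (Φ p))) := by rw [← Finset.mul_sum]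
      _ = Real.exp (-2 * β * k) * ∑ p ∈ U.pi (fun _ => (Finset.univ : Finset Bool)),
            Real.exp (E (patch U η p)) * 1 := by
          congr 1
          refine Finset.sum_nbij' (i := Φ) (j := Φ) (fun p _ => hpimem _) (fun p _ => hpimem _)
            (fun p _ => hΦΦ p) (fun p _ => hΦΦ p) (fun p _ => ?_)
          rw [mul_one]
  rw [gProb, gExp, div_le_iff₀ hpos1]
  convert hkey using 3
  case e'_2 => rfl
  rename_i σ
  by_cases h : P σ <;> simp [h]
end
end

section
/- Let G be an infinite (g,o)-growing graph with g ≥ 1. Fix i ∈ {0,…,m}, S ⊆ L_i and U = F_{i+1} ∪ S. Then for every subset C ⊆ U one has |∂₊C| − |∂₋C| ≥ g|C|. -/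
/- Common framework: Ising model with boundary conditions on (finite pieces of)
   locally finite graphs, heat-bath Glauber dynamics quantities. -/

open Finset
open scoped Classical

noncomputable section

open IsingGlauber

lemma card_filter_prod {V : Type*} [DecidableEq V] (s : Finset V) (t : V → Finset V)
    (Q : V → V → Prop) [∀ x y, Decidable (Q x y)] :
    ((s ×ˢ s.biUnion t).filter fun p => Q p.1 p.2).card
      = ∑ x ∈ s, ((s.biUnion t).filter fun y => Q x y).card := by
  rw [Finset.card_eq_sum_card_fiberwise (f := Prod.fst) (t := s)
    (fun p hp => (Finset.mem_product.1 (Finset.mem_filter.1 hp).1).1)]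
  refine Finset.sum_congr rfl fun x hx => ?_
  refine Finset.card_bij (fun p _ => p.2) ?_ ?_ ?_
  · intro p hp
    simp only [mem_filter, mem_product] at hp ⊢
    obtain ⟨⟨⟨h1, h2⟩, hQ⟩, hfst⟩ := hp
    exact ⟨h2, hfst ▸ hQ⟩
  · intro p hp q hq h
    simp only [mem_filter] at hp hq
    exact Prod.ext (hp.2.trans hq.2.symm) h
  · intro y hy
    simp only [mem_filter] at hy
    exact ⟨(x, y), by simp [mem_filter, mem_product, hx, hy.1, hy.2], rfl⟩

lemma mem_nbr {V : Type*} (G : SimpleGraph V) (hlf : G.LocallyFinite) (x z : V) :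
    z ∈ nbr G hlf x ↔ G.Adj x z := by
  simp [nbr]


/-- Lemma 3.4 of the paper: for a `(g,o)`-growing graph and
`C ⊆ U = F_{i+1} ∪ S`, one has `|∂₊C| - |∂₋C| ≥ g|C|`, where `∂₊C` are the boundary
edges of `C` whose outside endpoint lies in `U ∪ ∂_V B` and `∂₋C` those whose
outside endpoint lies in `B_i \ S`. -/
theorem statement6 {V : Type*} [DecidableEq V] [Infinite V]
    (G : SimpleGraph V) (hlf : G.LocallyFinite) (hconn : G.Connected)
    (g : ℕ) (hg : 1 ≤ g) (o : V)
    (hgrow : IsGrowing G hlf g o)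
    (m i : ℕ) (him : i ≤ m) (Bm : Finset V) (hBm : ∀ v : V, v ∈ Bm ↔ G.dist o v ≤ m)
    (S : Finset V) (hS : ∀ v ∈ S, G.dist o v = i)
    (U : Finset V) (hU : U = Bm.filter (fun v => i + 1 ≤ G.dist o v) ∪ S)
    (C : Finset V) (hC : C ⊆ U) :
    (g : ℤ) * (C.card : ℤ) ≤
      (((obd G hlf C).filter (fun p => p.2 ∈ U ∨ G.dist o p.2 = m + 1)).card : ℤ) -
        (((obd G hlf C).filter (fun p => G.dist o p.2 ≤ i ∧ p.2 ∉ S)).card : ℤ) := by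
  classical
  have hUfacts : ∀ x ∈ U, i ≤ G.dist o x ∧ G.dist o x ≤ m ∧ (G.dist o x ≤ i → x ∈ S) := by
    intro x hx
    rw [hU, mem_union] at hx
    rcases hx with hx | hx
    · rw [mem_filter] at hx
      exact ⟨le_trans (Nat.le_succ i) hx.2, (hBm x).1 hx.1, fun h => absurd h (by omega)⟩
    · have := hS x hx
      exact ⟨by omega, by omega, fun _ => hx⟩
  have hCf : ∀ x ∈ C, i ≤ G.dist o x ∧ G.dist o x ≤ m ∧ (G.dist o x ≤ i → x ∈ S) :=
    fun x hx => hUfacts x (hC hx)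
  -- Step A: lower bound for ∂₊
  have hA : ∑ x ∈ C, ((nbr G hlf x).filter fun z =>
        G.dist o z = G.dist o x + 1 ∧ z ∉ C).card ≤
      ((obd G hlf C).filter (fun p => p.2 ∈ U ∨ G.dist o p.2 = m + 1)).card := by
    have e0 := card_filter_prod C (nbr G hlf)
      (fun x z => G.Adj x z ∧ (G.dist o z = G.dist o x + 1 ∧ z ∉ C))
    have e1 : ∀ x ∈ C, ((C.biUnion (nbr G hlf)).filter fun z =>
        G.Adj x z ∧ (G.dist o z = G.dist o x + 1 ∧ z ∉ C)) =
        ((nbr G hlf x).filter fun z => G.dist o z = G.dist o x + 1 ∧ z ∉ C) := by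
      intro x hx
      ext z
      simp only [mem_filter, mem_biUnion, mem_nbr]
      constructor
      · rintro ⟨_, hadj, hP⟩; exact ⟨hadj, hP⟩
      · rintro ⟨hadj, hP⟩; exact ⟨⟨x, hx, hadj⟩, hadj, hP⟩
    have e2 := e0.trans (Finset.sum_congr rfl fun x hx => congrArg Finset.card (e1 x hx))
    rw [← e2]
    apply Finset.card_le_card
    intro p hp
    simp only [obd, mem_filter, mem_product] at hp ⊢
    obtain ⟨⟨h1, h2⟩, hadj, hdp, hnC⟩ := hp
    refine ⟨⟨⟨h1, h2⟩, hadj, hnC⟩, ?_⟩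
    obtain ⟨hi1, hm1, _⟩ := hCf p.1 h1
    rcases lt_or_eq_of_le hm1 with hlt | heq
    · left
      rw [hU, mem_union]
      left
      rw [mem_filter, hBm]
      exact ⟨by omega, by omega⟩
    · right; omega
  -- Step B: exact value of ∂₋
  have hB : ((obd G hlf C).filter (fun p => G.dist o p.2 ≤ i ∧ p.2 ∉ S)).card =
      ∑ x ∈ C, ((nbr G hlf x).filter fun z => G.dist o z ≤ i ∧ z ∉ S).card := by
    have e0 := card_filter_prod C (nbr G hlf)
      (fun x z => G.Adj x z ∧ (G.dist o z ≤ i ∧ z ∉ S))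
    have e1 : ∀ x ∈ C, ((C.biUnion (nbr G hlf)).filter fun z =>
        G.Adj x z ∧ (G.dist o z ≤ i ∧ z ∉ S)) =
        ((nbr G hlf x).filter fun z => G.dist o z ≤ i ∧ z ∉ S) := by
      intro x hx
      ext z
      simp only [mem_filter, mem_biUnion, mem_nbr]
      constructor
      · rintro ⟨_, hadj, hP⟩; exact ⟨hadj, hP⟩
      · rintro ⟨hadj, hP⟩; exact ⟨⟨x, hx, hadj⟩, hadj, hP⟩
    have e2 := e0.trans (Finset.sum_congr rfl fun x hx => congrArg Finset.card (e1 x hx))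
    rw [← e2]
    congr 1
    ext p
    simp only [obd, mem_filter, mem_product]
    constructor
    · rintro ⟨⟨hmem, hadj, _⟩, h2⟩; exact ⟨hmem, hadj, h2⟩
    · rintro ⟨⟨hm1, hm2⟩, hadj, hdi, hnS⟩
      have hnC : p.2 ∉ C := by
        intro hin
        obtain ⟨_, _, hSi⟩ := hCf p.2 hin
        exact hnS (hSi hdi)
      exact ⟨⟨⟨hm1, hm2⟩, hadj, hnC⟩, hdi, hnS⟩
  -- Step C: symmetry of internal directed edges
  have hsym : ∑ x ∈ C, ((nbr G hlf x).filter fun z =>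
        G.dist o z = G.dist o x + 1 ∧ z ∈ C).card =
      ∑ x ∈ C, ((nbr G hlf x).filter fun z => G.dist o x = G.dist o z + 1 ∧ z ∈ C).card := by
    have e0 := card_filter_prod C (nbr G hlf)
      (fun x z => G.Adj x z ∧ (G.dist o z = G.dist o x + 1 ∧ z ∈ C))
    have e1 : ∀ x ∈ C, ((C.biUnion (nbr G hlf)).filter fun z =>
        G.Adj x z ∧ (G.dist o z = G.dist o x + 1 ∧ z ∈ C)) =
        ((nbr G hlf x).filter fun z => G.dist o z = G.dist o x + 1 ∧ z ∈ C) := by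
      intro x hx
      ext z
      simp only [mem_filter, mem_biUnion, mem_nbr]
      constructor
      · rintro ⟨_, hadj, hP⟩; exact ⟨hadj, hP⟩
      · rintro ⟨hadj, hP⟩; exact ⟨⟨x, hx, hadj⟩, hadj, hP⟩
    have e2 := e0.trans (Finset.sum_congr rfl fun x hx => congrArg Finset.card (e1 x hx))
    have f0 := card_filter_prod C (nbr G hlf)
      (fun x z => G.Adj x z ∧ (G.dist o x = G.dist o z + 1 ∧ z ∈ C))
    have f1 : ∀ x ∈ C, ((C.biUnion (nbr G hlf)).filter fun z =>
        G.Adj x z ∧ (G.dist o x = G.dist o z + 1 ∧ z ∈ C)) =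
        ((nbr G hlf x).filter fun z => G.dist o x = G.dist o z + 1 ∧ z ∈ C) := by
      intro x hx
      ext z
      simp only [mem_filter, mem_biUnion, mem_nbr]
      constructor
      · rintro ⟨_, hadj, hP⟩; exact ⟨hadj, hP⟩
      · rintro ⟨hadj, hP⟩; exact ⟨⟨x, hx, hadj⟩, hadj, hP⟩
    have f2 := f0.trans (Finset.sum_congr rfl fun x hx => congrArg Finset.card (f1 x hx))
    rw [← e2, ← f2]
    have himg : ((C ×ˢ C.biUnion (nbr G hlf)).filter
          (fun p => G.Adj p.1 p.2 ∧ (G.dist o p.1 = G.dist o p.2 + 1 ∧ p.2 ∈ C))) =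
        ((C ×ˢ C.biUnion (nbr G hlf)).filter
          (fun p => G.Adj p.1 p.2 ∧ (G.dist o p.2 = G.dist o p.1 + 1 ∧ p.2 ∈ C))).image
          Prod.swap := by
      ext p
      simp only [mem_filter, mem_product, Finset.mem_image]
      constructor
      · rintro ⟨⟨h1', h2'⟩, hadj, hdd, hin⟩
        refine ⟨(p.2, p.1), ⟨⟨hin, ?_⟩, hadj.symm, hdd, h1'⟩, rfl⟩
        rw [mem_biUnion]
        exact ⟨p.2, hin, (mem_nbr G hlf p.2 p.1).2 hadj.symm⟩
      · rintro ⟨q, ⟨⟨hq1, hq2⟩, hadj, hdd, hin⟩, rfl⟩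
        refine ⟨⟨hin, ?_⟩, hadj.symm, hdd, hq1⟩
        rw [mem_biUnion]
        exact ⟨q.2, hin, (mem_nbr G hlf q.2 q.1).2 hadj.symm⟩
    rw [himg, Finset.card_image_of_injective _ Prod.swap_injective]
  -- Step D: pointwise inequality
  have hpt : ∀ x ∈ C,
      ((nbr G hlf x).filter fun z => G.dist o z ≤ i ∧ z ∉ S).card +
      ((nbr G hlf x).filter fun z => G.dist o x = G.dist o z + 1 ∧ z ∈ C).card + g ≤
      ((nbr G hlf x).filter fun z => G.dist o z = G.dist o x + 1 ∧ z ∉ C).card +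
      ((nbr G hlf x).filter fun z => G.dist o z = G.dist o x + 1 ∧ z ∈ C).card := by
    intro x hx
    obtain ⟨hix, hmx, _⟩ := hCf x hx
    have hup : ((nbr G hlf x).filter fun z => G.dist o z = G.dist o x + 1 ∧ z ∈ C).card +
        ((nbr G hlf x).filter fun z => G.dist o z = G.dist o x + 1 ∧ z ∉ C).card =
        ((nbr G hlf x).filter fun z => G.dist o z = G.dist o x + 1).card := by
      rw [← Finset.filter_filter, ← Finset.filter_filter]
      exact Finset.card_filter_add_card_filter_not (fun z => z ∈ C)
    have hdn : ((nbr G hlf x).filter fun z => G.dist o z ≤ i ∧ z ∉ S).card +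
        ((nbr G hlf x).filter fun z => G.dist o x = G.dist o z + 1 ∧ z ∈ C).card ≤
        ((nbr G hlf x).filter fun z => G.dist o z ≤ G.dist o x).card := by
      rw [← Finset.card_union_of_disjoint]
      · apply Finset.card_le_card
        intro z hz
        simp only [mem_union, mem_filter] at hz ⊢
        rcases hz with ⟨h1, h2, _⟩ | ⟨h1, h2, _⟩
        · exact ⟨h1, by omega⟩
        · exact ⟨h1, by omega⟩
      · rw [Finset.disjoint_left]
        intro z hz1 hz2
        simp only [mem_filter] at hz1 hz2
        obtain ⟨_, hdi, hnS⟩ := hz1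
        obtain ⟨_, _, hinC⟩ := hz2
        obtain ⟨_, _, hSi⟩ := hCf z hinC
        exact hnS (hSi hdi)
    have := hgrow x
    omega
  -- combine
  have hsum : ∑ x ∈ C, ((nbr G hlf x).filter fun z => G.dist o z ≤ i ∧ z ∉ S).card +
      ∑ x ∈ C, ((nbr G hlf x).filter fun z =>
        G.dist o x = G.dist o z + 1 ∧ z ∈ C).card + g * C.card ≤
      ∑ x ∈ C, ((nbr G hlf x).filter fun z => G.dist o z = G.dist o x + 1 ∧ z ∉ C).card +
      ∑ x ∈ C, ((nbr G hlf x).filter fun z =>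
        G.dist o z = G.dist o x + 1 ∧ z ∈ C).card := by
    have h := Finset.sum_le_sum hpt
    simp only [Finset.sum_add_distrib, Finset.sum_const, smul_eq_mul] at h
    have hcg : C.card * g = g * C.card := Nat.mul_comm _ _
    omega
  have key : g * C.card + ((obd G hlf C).filter
        (fun p => G.dist o p.2 ≤ i ∧ p.2 ∉ S)).card ≤
      ((obd G hlf C).filter (fun p => p.2 ∈ U ∨ G.dist o p.2 = m + 1)).card := by
    rw [hB]
    omega
  have key' : (g : ℤ) * (C.card : ℤ) +
      (((obd G hlf C).filter (fun p => G.dist o p.2 ≤ i ∧ p.2 ∉ S)).card : ℤ) ≤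
      (((obd G hlf C).filter (fun p => p.2 ∈ U ∨ G.dist o p.2 = m + 1)).card : ℤ) := by
    exact_mod_cast key
  linarith
end
end

section
/- Let G be a (possibly infinite) graph with maximal degree at most Δ and let v be a fixed vertex of G. Then for every p ≥ 1, the number of connected vertex subsets of G with exactly p vertices that contain v is at most (e(Δ+1))^p, where e is Euler's number. -/
/- Common framework: Ising model with boundary conditions on (finite pieces of)
   locally finite graphs, heat-bath Glauber dynamics quantities. -/

open Finset
open scoped Classical

noncomputable section

open IsingGlauber

open scoped Nat

lemma numeric (Δ p : ℕ) (hp : 1 ≤ p) :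
    ((p * Δ).choose (p - 1) : ℝ) ≤ (Real.exp 1 * ((Δ : ℝ) + 1)) ^ p := by
  have h1 : ((p * Δ).choose (p - 1) : ℝ) ≤ ((p * Δ : ℕ) : ℝ) ^ (p - 1) / ((p - 1)! : ℕ) :=
    Nat.choose_le_pow_div _ _
  have h2 : ((p * Δ : ℕ) : ℝ) ^ (p - 1) = (p : ℝ) ^ (p - 1) * (Δ : ℝ) ^ (p - 1) := by
    push_cast; ring
  have h3 : (p : ℝ) ^ (p - 1) / ((p - 1)! : ℕ) ≤ Real.exp p :=
    Real.pow_div_factorial_le_exp (x := (p:ℝ)) (by positivity) (p - 1)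
  have hfac : (0 : ℝ) < ((p - 1)! : ℕ) := by positivity
  calc ((p * Δ).choose (p - 1) : ℝ) ≤ (p : ℝ) ^ (p - 1) * (Δ : ℝ) ^ (p - 1) / ((p - 1)! : ℕ) := by
        rw [← h2]; exact h1
    _ = (p : ℝ) ^ (p - 1) / ((p - 1)! : ℕ) * (Δ : ℝ) ^ (p - 1) := by ring
    _ ≤ Real.exp p * ((Δ : ℝ) + 1) ^ p := by
        apply mul_le_mul h3 ?_ (by positivity) (Real.exp_pos _).le
        calc (Δ : ℝ) ^ (p - 1) ≤ ((Δ : ℝ) + 1) ^ (p - 1) := by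
              gcongr; linarith
          _ ≤ ((Δ : ℝ) + 1) ^ p := by
              apply pow_le_pow_right₀ (by linarith [Nat.cast_nonneg (α := ℝ) Δ]) (Nat.sub_le _ _)
    _ = (Real.exp 1 * ((Δ : ℝ) + 1)) ^ p := by
        rw [mul_pow, ← Real.exp_nat_mul]; ring_nf

namespace KestenAux

variable {V : Type*} [DecidableEq V]

/-- Enumeration of the neighbours of `x`, with default `v`. -/
def enum (G : SimpleGraph V) (hlf : G.LocallyFinite) (v x : V) (j : ℕ) : V :=
  (nbr G hlf x).toList.getD j v

variable (G : SimpleGraph V) (hlf : G.LocallyFinite) (v : V)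

lemma enum_mem_of_lt {x : V} {j : ℕ} (h : j < (nbr G hlf x).card) :
    enum G hlf v x j ∈ nbr G hlf x := by
  have hl : j < (nbr G hlf x).toList.length := by rwa [Finset.length_toList]
  rw [enum, List.getD_eq_getElem _ _ hl]
  exact Finset.mem_toList.mp (List.getElem_mem hl)

lemma exists_enum {x y : V} (hy : y ∈ nbr G hlf x) :
    ∃ j : ℕ, j < (nbr G hlf x).card ∧ enum G hlf v x j = y := by
  have : y ∈ (nbr G hlf x).toList := Finset.mem_toList.mpr hy
  obtain ⟨i, hi, he⟩ := List.mem_iff_getElem.mp this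
  exact ⟨i, by rwa [Finset.length_toList] at hi,
    by rw [enum, List.getD_eq_getElem _ _ hi, he]⟩

lemma enum_injOn {x : V} {j₁ j₂ : ℕ} (h₁ : j₁ < (nbr G hlf x).card)
    (h₂ : j₂ < (nbr G hlf x).card) (he : enum G hlf v x j₁ = enum G hlf v x j₂) :
    j₁ = j₂ := by
  have hl₁ : j₁ < (nbr G hlf x).toList.length := by rwa [Finset.length_toList]
  have hl₂ : j₂ < (nbr G hlf x).toList.length := by rwa [Finset.length_toList]
  rw [enum, enum, List.getD_eq_getElem _ _ hl₁, List.getD_eq_getElem _ _ hl₂] at he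
  exact (List.Nodup.getElem_inj_iff (Finset.nodup_toList _)).mp he

variable (C : Finset V)

/-- Labels of the new children of `x` given visited list `st`. -/
def labs (x : V) (st : List V) : Finset ℕ :=
  (Finset.range ((nbr G hlf x).card)).filter
    (fun j => enum G hlf v x j ∈ C ∧ enum G hlf v x j ∉ st)

/-- Generic BFS decoding run driven by a code `f`. -/
def run (f : ℕ → Finset ℕ) : ℕ → List V
  | 0 => [v]
  | n + 1 =>
    run f n ++ if h : n < (run f n).length then
        ((f n).sort (· ≤ ·)).map (fun j => enum G hlf v ((run f n)[n]) j)
      else []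

/-- Greedy BFS exploration of `C` from `v`. -/
def bfs : ℕ → List V
  | 0 => [v]
  | n + 1 =>
    bfs n ++ if h : n < (bfs n).length then
        ((labs G hlf v C ((bfs n)[n]) (bfs n)).sort (· ≤ ·)).map
          (fun j => enum G hlf v ((bfs n)[n]) j)
      else []

/-- The code recorded by the BFS exploration. -/
def codeF (n : ℕ) : Finset ℕ :=
  if h : n < (bfs G hlf v C n).length then labs G hlf v C ((bfs G hlf v C n)[n]) (bfs G hlf v C n)
  else ∅

lemma run_congr (f g : ℕ → Finset ℕ) : ∀ n, (∀ m < n, f m = g m) → run G hlf v f n = run G hlf v g n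
  | 0, _ => rfl
  | n + 1, h => by
    have ih := run_congr f g n (fun m hm => h m (hm.trans (Nat.lt_succ_self n)))
    simp only [run, ih, h n (Nat.lt_succ_self n)]

lemma run_codeF : ∀ n, run G hlf v (codeF G hlf v C) n = bfs G hlf v C n
  | 0 => rfl
  | n + 1 => by
    have ih := run_codeF n
    simp only [run, bfs, ih, codeF]
    by_cases h : n < (bfs G hlf v C n).length
    · rw [dif_pos h, dif_pos h, dif_pos h]
    · rw [dif_neg h, dif_neg h]

lemma bfs_prefix_succ (n : ℕ) : bfs G hlf v C n <+: bfs G hlf v C (n + 1) := by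
  rw [bfs]; exact List.prefix_append _ _

lemma bfs_prefix {m n : ℕ} (h : m ≤ n) : bfs G hlf v C m <+: bfs G hlf v C n := by
  induction n with
  | zero => rw [Nat.le_zero.mp h]
  | succ n ih =>
    rcases Nat.lt_or_ge m (n + 1) with h' | h'
    · exact (ih (Nat.lt_succ_iff.mp h')).trans (bfs_prefix_succ G hlf v C n)
    · rw [Nat.le_antisymm h h']

lemma bfs_stuck {n : ℕ} (h : (bfs G hlf v C n).length ≤ n) :
    ∀ m, n ≤ m → bfs G hlf v C m = bfs G hlf v C n := by
  intro m hm
  induction m with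
  | zero => rw [Nat.le_zero.mp hm]
  | succ m ih =>
    rcases Nat.lt_or_ge n (m + 1) with h' | h'
    · have hem := ih (Nat.lt_succ_iff.mp h')
      rw [bfs, hem, dif_neg (by omega), List.append_nil]
    · rw [Nat.le_antisymm hm h']

lemma mem_bfs_v (n : ℕ) : v ∈ bfs G hlf v C n :=
  (bfs_prefix G hlf v C (Nat.zero_le n)).subset (by simp [bfs])

lemma bfs_subset (hv : v ∈ C) : ∀ n, ∀ y ∈ bfs G hlf v C n, y ∈ C := by
  intro n
  induction n with
  | zero => intro y hy; simp only [bfs, List.mem_singleton] at hy; rwa [hy]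
  | succ n ih =>
    intro y hy
    rw [bfs] at hy
    rcases List.mem_append.mp hy with h | h
    · exact ih y h
    · by_cases hl : n < (bfs G hlf v C n).length
      · rw [dif_pos hl] at h
        obtain ⟨j, hj, he⟩ := List.mem_map.mp h
        rw [Finset.mem_sort] at hj
        rw [labs, Finset.mem_filter] at hj
        rw [← he]; exact hj.2.1
      · rw [dif_neg hl] at h; exact absurd h List.not_mem_nil

lemma bfs_nodup : ∀ n, (bfs G hlf v C n).Nodup := by
  intro n
  induction n with
  | zero => simp [bfs]
  | succ n ih =>
    rw [bfs]
    by_cases hl : n < (bfs G hlf v C n).length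
    · rw [dif_pos hl]
      apply List.Nodup.append ih
      · apply List.Nodup.map_on _ (Finset.sort_nodup _ _)
        intro j₁ h₁ j₂ h₂ he
        rw [Finset.mem_sort, labs, Finset.mem_filter, Finset.mem_range] at h₁ h₂
        exact enum_injOn G hlf v h₁.1 h₂.1 he
      · intro y hy hy'
        obtain ⟨j, hj, he⟩ := List.mem_map.mp hy'
        rw [Finset.mem_sort, labs, Finset.mem_filter] at hj
        rw [← he] at hy
        exact hj.2.2 hy
    · rw [dif_neg hl, List.append_nil]; exact ih

lemma length_bfs_succ (n : ℕ) :
    (bfs G hlf v C (n + 1)).length = (bfs G hlf v C n).length + (codeF G hlf v C n).card := by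
  rw [bfs, codeF, List.length_append]
  by_cases hl : n < (bfs G hlf v C n).length
  · rw [dif_pos hl, dif_pos hl, List.length_map, Finset.length_sort]
  · rw [dif_neg hl, dif_neg hl]; simp

lemma length_bfs (n : ℕ) :
    (bfs G hlf v C n).length = 1 + ∑ m ∈ Finset.range n, (codeF G hlf v C m).card := by
  induction n with
  | zero => simp [bfs]
  | succ n ih => rw [length_bfs_succ, ih, Finset.sum_range_succ]; ring

lemma closure_step (n : ℕ) (h : n < (bfs G hlf v C n).length) (y : V) (hy : y ∈ C)
    (hadj : G.Adj ((bfs G hlf v C n)[n]) y) : y ∈ bfs G hlf v C (n + 1) := by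
  by_cases hmem : y ∈ bfs G hlf v C n
  · exact (bfs_prefix_succ G hlf v C n).subset hmem
  · have hnbr : y ∈ nbr G hlf ((bfs G hlf v C n)[n]) := by
      rw [nbr, SimpleGraph.mem_neighborFinset]; exact hadj
    obtain ⟨j, hj, he⟩ := exists_enum G hlf v hnbr
    have hjl : j ∈ labs G hlf v C ((bfs G hlf v C n)[n]) (bfs G hlf v C n) := by
      rw [labs, Finset.mem_filter, Finset.mem_range, he]
      exact ⟨hj, hy, hmem⟩
    rw [bfs, dif_pos h]
    apply List.mem_append_right
    exact List.mem_map.mpr ⟨j, (Finset.mem_sort _).mpr hjl, he⟩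

lemma conn_subset (hconn : (G.induce (C : Set V)).Connected) (hv : v ∈ C) (S : Finset V)
    (hvS : v ∈ S) (hcl : ∀ x ∈ S, ∀ y ∈ C, G.Adj x y → y ∈ S) : ∀ c ∈ C, c ∈ S := by
  intro c hc
  obtain ⟨w⟩ := hconn.preconnected ⟨v, hv⟩ ⟨c, hc⟩
  have key : ∀ (a b : (C : Set V)) (_ : (G.induce (C : Set V)).Walk a b), a.1 ∈ S → b.1 ∈ S := by
    intro a b w
    induction w with
    | nil => intro h; exact h
    | @cons a b _ hadj w ih =>
      intro h
      exact ih (hcl a.1 h b.1 b.2 (by simpa using hadj))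
  exact key _ _ w hvS

lemma bfs_len_le (hv : v ∈ C) (n : ℕ) : (bfs G hlf v C n).length ≤ C.card := by
  rw [← List.toFinset_card_of_nodup (bfs_nodup G hlf v C n)]
  exact Finset.card_le_card (fun y hy => bfs_subset G hlf v C hv n y (List.mem_toFinset.mp hy))

lemma bfs_complete (hv : v ∈ C) (hconn : (G.induce (C : Set V)).Connected)
    {n : ℕ} (hn : (bfs G hlf v C n).length ≤ n) : (bfs G hlf v C n).toFinset = C := by
  apply Finset.Subset.antisymm
  · intro y hy
    exact bfs_subset G hlf v C hv n y (List.mem_toFinset.mp hy)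
  · intro c hc
    apply conn_subset G v C hconn hv _ (List.mem_toFinset.mpr (mem_bfs_v G hlf v C n)) _ c hc
    intro x hx y hy hadj
    obtain ⟨i, hi, hix⟩ := List.mem_iff_getElem.mp (List.mem_toFinset.mp hx)
    have hin : i < n := lt_of_lt_of_le hi hn
    have hii : i < (bfs G hlf v C i).length := by
      by_contra hcon
      have := bfs_stuck G hlf v C (Nat.le_of_not_lt hcon) n hin.le
      rw [this] at hi
      exact hcon hi
    have hgeq : (bfs G hlf v C i)[i] = x := by
      rw [(bfs_prefix G hlf v C hin.le).getElem hii, hix]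
    have := closure_step G hlf v C i hii y hy (by rwa [hgeq])
    exact List.mem_toFinset.mpr ((bfs_prefix G hlf v C hin).subset this)

lemma bfs_covers (hv : v ∈ C) (hconn : (G.induce (C : Set V)).Connected) :
    (bfs G hlf v C C.card).toFinset = C ∧ (bfs G hlf v C C.card).length = C.card := by
  have h1 := bfs_complete G hlf v C hv hconn (bfs_len_le G hlf v C hv C.card)
  refine ⟨h1, ?_⟩
  rw [← List.toFinset_card_of_nodup (bfs_nodup G hlf v C C.card), h1]

lemma code_sum (hv : v ∈ C) (hconn : (G.induce (C : Set V)).Connected) :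
    ∑ m ∈ Finset.range C.card, (codeF G hlf v C m).card = C.card - 1 := by
  have h := (bfs_covers G hlf v C hv hconn).2
  rw [length_bfs] at h
  omega

lemma codeF_subset {Δ : ℕ} (hΔ : ∀ x : V, (nbr G hlf x).card ≤ Δ) (n : ℕ) :
    codeF G hlf v C n ⊆ Finset.range Δ := by
  rw [codeF]
  by_cases h : n < (bfs G hlf v C n).length
  · rw [dif_pos h]
    intro j hj
    rw [labs, Finset.mem_filter, Finset.mem_range] at hj
    rw [Finset.mem_range]
    exact lt_of_lt_of_le hj.1 (hΔ _)
  · rw [dif_neg h]; exact Finset.empty_subset _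

/-- The code of `C`, as a finite set of pairs. -/
def codeSet (p Δ : ℕ) : Finset (ℕ × ℕ) :=
  (Finset.range p ×ˢ Finset.range Δ).filter (fun q => q.2 ∈ codeF G hlf v C q.1)

/-- Decoding a set of pairs back into a vertex set. -/
def decode (p : ℕ) (S : Finset (ℕ × ℕ)) : Finset V :=
  (run G hlf v (fun n => (S.filter (fun q => q.1 = n)).image Prod.snd) p).toFinset

lemma decode_codeSet {Δ : ℕ} (hΔ : ∀ x : V, (nbr G hlf x).card ≤ Δ)
    (hv : v ∈ C) (hconn : (G.induce (C : Set V)).Connected) :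
    decode G hlf v C.card (codeSet G hlf v C C.card Δ) = C := by
  rw [decode]
  have hrun : run G hlf v
      (fun n => ((codeSet G hlf v C C.card Δ).filter (fun q => q.1 = n)).image Prod.snd)
      C.card = bfs G hlf v C C.card := by
    rw [run_congr G hlf v _ (codeF G hlf v C) C.card, run_codeF]
    intro m hm
    ext j
    constructor
    · intro hj
      obtain ⟨q, hq, hsnd⟩ := Finset.mem_image.mp hj
      rw [Finset.mem_filter] at hq
      obtain ⟨hq1, hq2⟩ := hq
      rw [codeSet, Finset.mem_filter] at hq1
      rw [← hsnd, ← hq2]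
      exact hq1.2
    · intro hj
      apply Finset.mem_image.mpr
      refine ⟨(m, j), Finset.mem_filter.mpr ⟨?_, rfl⟩, rfl⟩
      rw [codeSet, Finset.mem_filter]
      exact ⟨Finset.mem_product.mpr ⟨Finset.mem_range.mpr hm, codeF_subset G hlf v C hΔ m hj⟩, hj⟩
  rw [hrun]
  exact (bfs_covers G hlf v C hv hconn).1

lemma codeSet_card {Δ : ℕ} (hΔ : ∀ x : V, (nbr G hlf x).card ≤ Δ)
    (hv : v ∈ C) (hconn : (G.induce (C : Set V)).Connected) :
    (codeSet G hlf v C C.card Δ).card = C.card - 1 := by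
  rw [Finset.card_eq_sum_card_fiberwise (f := Prod.fst) (t := Finset.range C.card)
    (fun q hq => by
      simp only [Finset.mem_coe, codeSet, Finset.mem_filter, Finset.mem_product] at hq ⊢
      exact hq.1.1)]
  rw [← code_sum G hlf v C hv hconn]
  apply Finset.sum_congr rfl
  intro n hn
  have : (codeSet G hlf v C C.card Δ).filter (fun q => q.1 = n) =
      (codeF G hlf v C n).image (fun j => (n, j)) := by
    ext q
    constructor
    · intro hq
      rw [Finset.mem_filter] at hq
      obtain ⟨hq1, hq2⟩ := hq
      rw [codeSet, Finset.mem_filter] at hq1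
      apply Finset.mem_image.mpr
      refine ⟨q.2, ?_, ?_⟩
      · rw [← hq2]; exact hq1.2
      · rw [← hq2]
    · intro hq
      obtain ⟨j, hj, rfl⟩ := Finset.mem_image.mp hq
      rw [Finset.mem_filter]
      refine ⟨?_, rfl⟩
      rw [codeSet, Finset.mem_filter]
      exact ⟨Finset.mem_product.mpr ⟨hn, codeF_subset G hlf v C hΔ n hj⟩, hj⟩
  rw [this, Finset.card_image_of_injective _ (fun a b h => by injection h)]

lemma codeSet_subset (p Δ : ℕ) :
    codeSet G hlf v C p Δ ⊆ Finset.range p ×ˢ Finset.range Δ :=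
  Finset.filter_subset _ _

end KestenAux

/-- Kesten's lemma: in a graph of maximal degree at most `Δ`, the
number of connected vertex subsets with exactly `p` vertices containing a fixed
vertex `v` is finite and at most `(e(Δ+1))^p`. -/
theorem statement8 {V : Type*} [DecidableEq V]
    (G : SimpleGraph V) (hlf : G.LocallyFinite)
    (Δ : ℕ) (hΔ : ∀ x : V, (nbr G hlf x).card ≤ Δ)
    (v : V) (p : ℕ) (hp : 1 ≤ p) :
    {C : Finset V | v ∈ C ∧ C.card = p ∧ (G.induce (C : Set V)).Connected}.Finite ∧
      (({C : Finset V | v ∈ C ∧ C.card = p ∧ (G.induce (C : Set V)).Connected}.ncard : ℝ) ≤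
        (Real.exp 1 * ((Δ : ℝ) + 1)) ^ p) := by
  have hsub : {C : Finset V | v ∈ C ∧ C.card = p ∧ (G.induce (C : Set V)).Connected} ⊆
      KestenAux.decode G hlf v p ''
        ↑((Finset.range p ×ˢ Finset.range Δ).powersetCard (p - 1)) := by
    rintro C ⟨hv, hcard, hconn⟩
    subst hcard
    refine ⟨KestenAux.codeSet G hlf v C C.card Δ, ?_,
      KestenAux.decode_codeSet G hlf v C hΔ hv hconn⟩
    rw [Finset.mem_coe, Finset.mem_powersetCard]
    exact ⟨KestenAux.codeSet_subset G hlf v C _ _,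
      KestenAux.codeSet_card G hlf v C hΔ hv hconn⟩
  have hfin2 : (KestenAux.decode G hlf v p ''
      ↑((Finset.range p ×ˢ Finset.range Δ).powersetCard (p - 1))).Finite :=
    (Finset.finite_toSet _).image _
  refine ⟨hfin2.subset hsub, ?_⟩
  have h1 : {C : Finset V | v ∈ C ∧ C.card = p ∧ (G.induce (C : Set V)).Connected}.ncard ≤
      (p * Δ).choose (p - 1) := by
    calc {C : Finset V | v ∈ C ∧ C.card = p ∧ (G.induce (C : Set V)).Connected}.ncard
        ≤ (KestenAux.decode G hlf v p ''
          ↑((Finset.range p ×ˢ Finset.range Δ).powersetCard (p - 1))).ncard :=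
          Set.ncard_le_ncard hsub hfin2
      _ ≤ (↑((Finset.range p ×ˢ Finset.range Δ).powersetCard (p - 1)) : Set (Finset (ℕ × ℕ))).ncard :=
          Set.ncard_image_le (Finset.finite_toSet _)
      _ = ((Finset.range p ×ˢ Finset.range Δ).powersetCard (p - 1)).card :=
          Set.ncard_coe_finset _
      _ = (p * Δ).choose (p - 1) := by
          rw [Finset.card_powersetCard, Finset.card_product, Finset.card_range,
            Finset.card_range]
  calc ({C : Finset V | v ∈ C ∧ C.card = p ∧ (G.induce (C : Set V)).Connected}.ncard : ℝ)
      ≤ ((p * Δ).choose (p - 1) : ℝ) := Nat.cast_le.mpr h1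
    _ ≤ (Real.exp 1 * ((Δ : ℝ) + 1)) ^ p := numeric Δ p hp
end
end

section
/- Let G = (V,E) be an infinite (g,o)-growing graph with g ≥ 1. Then for every finite nonempty subset S ⊆ V one has |∂_E S| ≥ g|S|, where ∂_E S is the set of edges with exactly one endpoint in S; consequently the edge isoperimetric constant i_e(G) = inf{ |∂_E S|/|S| : S ⊆ V finite nonempty } satisfies i_e(G) ≥ g > 0, i.e. G is nonamenable. -/
/- Common framework: Ising model with boundary conditions on (finite pieces of)
   locally finite graphs, heat-bath Glauber dynamics quantities. -/

open Finset
open scoped Classical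

noncomputable section

open IsingGlauber

private lemma card_filter_product_sum' {α β : Type*} (S : Finset α) (T : Finset β)
    (p : α → β → Prop) :
    ((S ×ˢ T).filter fun z => p z.1 z.2).card = ∑ x ∈ S, (T.filter (p x)).card := by
  rw [Finset.card_eq_sum_card_fiberwise
    (f := Prod.fst) (t := S)
    (fun z hz => (Finset.mem_product.1 (Finset.mem_filter.1 hz).1).1)]
  refine Finset.sum_congr rfl fun x hx => ?_
  refine Finset.card_bij (fun z _ => z.2) ?_ ?_ ?_
  · intro z hz
    simp only [mem_filter, mem_product] at hz ⊢
    obtain ⟨⟨⟨_, h2⟩, hp⟩, hfst⟩ := hz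
    exact ⟨h2, hfst ▸ hp⟩
  · intro z hz w hw h
    simp only [mem_filter] at hz hw
    exact Prod.ext (hz.2.trans hw.2.symm) h
  · intro y hy
    simp only [mem_filter] at hy
    exact ⟨(x, y), by simp [mem_filter, mem_product, hx, hy.1, hy.2], rfl⟩

/-- an infinite `(g,o)`-growing graph satisfies `|∂_E S| ≥ g|S|` for all
finite nonempty vertex sets `S`; consequently its edge isoperimetric (Cheeger)
constant is at least `g > 0`, i.e. the graph is nonamenable. -/
theorem statement9 {V : Type*} [DecidableEq V] [Infinite V]
    (G : SimpleGraph V) (hlf : G.LocallyFinite) (hconn : G.Connected)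
    (g : ℕ) (hg : 1 ≤ g) (o : V)
    (hgrow : IsGrowing G hlf g o) :
    (∀ S : Finset V, S.Nonempty → g * S.card ≤ (obd G hlf S).card) ∧
      ∀ S : Finset V, S.Nonempty → (g : ℝ) ≤ ((obd G hlf S).card : ℝ) / (S.card : ℝ) := by
  have hmem : ∀ x y : V, y ∈ nbr G hlf x ↔ G.Adj x y := by
    intro x y
    simp [nbr, SimpleGraph.mem_neighborFinset]
  set d : V → ℕ := fun v => G.dist o v with hd
  have key : ∀ S : Finset V, S.Nonempty → g * S.card ≤ (obd G hlf S).card := by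
    intro S hS
    set T : Finset V := S.biUnion (fun c => nbr G hlf c) with hT
    -- split up-counts of each vertex into inside-S and outside-S parts
    have hsplit : ∀ x ∈ S,
        ((nbr G hlf x).filter fun z => d z = d x + 1).card =
          (S.filter fun y => G.Adj x y ∧ d y = d x + 1).card +
          (T.filter fun y => (G.Adj x y ∧ d y = d x + 1) ∧ y ∉ S).card := by
      intro x hx
      have h1 : (S.filter fun y => G.Adj x y ∧ d y = d x + 1) =
          ((nbr G hlf x).filter fun z => d z = d x + 1).filter (fun y => y ∈ S) := by
        ext y
        simp only [mem_filter, hmem]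
        tauto
      have h2 : (T.filter fun y => (G.Adj x y ∧ d y = d x + 1) ∧ y ∉ S) =
          ((nbr G hlf x).filter fun z => d z = d x + 1).filter (fun y => y ∉ S) := by
        ext y
        simp only [mem_filter, hmem, hT, mem_biUnion]
        constructor
        · rintro ⟨-, h⟩
          exact h
        · rintro ⟨⟨hadj, hdy⟩, hns⟩
          exact ⟨⟨x, hx, hadj⟩, ⟨hadj, hdy⟩, hns⟩
      rw [h1, h2, Finset.card_filter_add_card_filter_not]
    -- the inside-S up-pairs inject (by swapping) into inside-S down-pairs
    have hswap :
        ((S ×ˢ S).filter fun z => G.Adj z.1 z.2 ∧ d z.2 = d z.1 + 1).card ≤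
          ((S ×ˢ S).filter fun z => G.Adj z.1 z.2 ∧ d z.2 ≤ d z.1).card := by
      refine Finset.card_le_card_of_injOn Prod.swap ?_ ?_
      · intro z hz
        obtain ⟨a, b⟩ := z
        simp only [Finset.mem_coe, mem_filter, mem_product, Prod.swap_prod_mk] at hz ⊢
        obtain ⟨⟨h1, h2⟩, hadj, hdz⟩ := hz
        exact ⟨⟨h2, h1⟩, hadj.symm, by omega⟩
      · intro a _ b _ h
        exact Prod.swap_injective h
    -- inside-S down-pairs are at most the total down-count sum
    have hdnle : ∀ x ∈ S,
        (S.filter fun y => G.Adj x y ∧ d y ≤ d x).card ≤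
          ((nbr G hlf x).filter fun z => d z ≤ d x).card := by
      intro x hx
      apply Finset.card_le_card
      intro y hy
      simp only [mem_filter, hmem] at hy ⊢
      exact ⟨hy.2.1, hy.2.2⟩
    -- outside-S up-pairs are boundary pairs
    have hout :
        ((S ×ˢ T).filter fun z => (G.Adj z.1 z.2 ∧ d z.2 = d z.1 + 1) ∧ z.2 ∉ S).card ≤
          (obd G hlf S).card := by
      apply Finset.card_le_card
      intro z hz
      simp only [mem_filter, obd, mem_product] at hz ⊢
      exact ⟨hz.1, hz.2.1.1, hz.2.2⟩
    -- assemble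
    have hgrowsum :
        (∑ x ∈ S, ((nbr G hlf x).filter fun z => d z ≤ d x).card) + g * S.card ≤
          ∑ x ∈ S, ((nbr G hlf x).filter fun z => d z = d x + 1).card := by
      have : ∀ x ∈ S,
          ((nbr G hlf x).filter fun z => d z ≤ d x).card + g ≤
            ((nbr G hlf x).filter fun z => d z = d x + 1).card := fun x _ => hgrow x
      calc (∑ x ∈ S, ((nbr G hlf x).filter fun z => d z ≤ d x).card) + g * S.card
          = ∑ x ∈ S, (((nbr G hlf x).filter fun z => d z ≤ d x).card + g) := by
            rw [Finset.sum_add_distrib, Finset.sum_const, smul_eq_mul, mul_comm]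
        _ ≤ _ := Finset.sum_le_sum this
    have hupsum :
        (∑ x ∈ S, ((nbr G hlf x).filter fun z => d z = d x + 1).card) =
          ((S ×ˢ S).filter fun z => G.Adj z.1 z.2 ∧ d z.2 = d z.1 + 1).card +
          ((S ×ˢ T).filter fun z => (G.Adj z.1 z.2 ∧ d z.2 = d z.1 + 1) ∧ z.2 ∉ S).card := by
      have e1 : ((S ×ˢ S).filter fun z => G.Adj z.1 z.2 ∧ d z.2 = d z.1 + 1).card =
          ∑ x ∈ S, (S.filter fun y => G.Adj x y ∧ d y = d x + 1).card :=
        by convert card_filter_product_sum' S S (fun x y => G.Adj x y ∧ d y = d x + 1) using 3 <;> congr!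
      have e2 : ((S ×ˢ T).filter fun z => (G.Adj z.1 z.2 ∧ d z.2 = d z.1 + 1) ∧ z.2 ∉ S).card =
          ∑ x ∈ S, (T.filter fun y => (G.Adj x y ∧ d y = d x + 1) ∧ y ∉ S).card :=
        by convert card_filter_product_sum' S T (fun x y => (G.Adj x y ∧ d y = d x + 1) ∧ y ∉ S) using 3 <;> congr!
      rw [e1, e2, ← Finset.sum_add_distrib]
      exact Finset.sum_congr rfl hsplit
    have hdnsum :
        ((S ×ˢ S).filter fun z => G.Adj z.1 z.2 ∧ d z.2 ≤ d z.1).card ≤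
          ∑ x ∈ S, ((nbr G hlf x).filter fun z => d z ≤ d x).card := by
      have e3 : ((S ×ˢ S).filter fun z => G.Adj z.1 z.2 ∧ d z.2 ≤ d z.1).card =
          ∑ x ∈ S, (S.filter fun y => G.Adj x y ∧ d y ≤ d x).card :=
        by convert card_filter_product_sum' S S (fun x y => G.Adj x y ∧ d y ≤ d x) using 3 <;> congr!
      rw [e3]
      exact Finset.sum_le_sum hdnle
    have hfinal :
        (∑ x ∈ S, ((nbr G hlf x).filter fun z => d z ≤ d x).card) + g * S.card ≤
          (∑ x ∈ S, ((nbr G hlf x).filter fun z => d z ≤ d x).card) + (obd G hlf S).card := by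
      calc (∑ x ∈ S, ((nbr G hlf x).filter fun z => d z ≤ d x).card) + g * S.card
          ≤ ∑ x ∈ S, ((nbr G hlf x).filter fun z => d z = d x + 1).card := hgrowsum
        _ = _ + _ := hupsum
        _ ≤ _ + _ := Nat.add_le_add (hswap.trans hdnsum) hout
    exact Nat.le_of_add_le_add_left hfinal
  refine ⟨key, fun S hS => ?_⟩
  have hpos : (0 : ℝ) < (S.card : ℝ) := by
    exact_mod_cast Finset.card_pos.2 hS
  rw [le_div_iff₀ hpos]
  exact_mod_cast key S hS
end
end
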